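/- arXiv:1112.3819 — 2 statements merged into one kernel-verified Lean document; each statement's English description precedes it below -/
import Mathlib

section
/- (Itô) If a nontrivial finite group G is the product G = AB of two abelian subgroups A and B, then A or B contains a nontrivial normal subgroup of G. -/
/- Auxiliary definitions for the "radical ring" argument in the final case of Itô's theorem. -/

private def starFun {G : Type} [Group G] (fa : G → G) (u v : G) : G :=
  fa v * u * (fa v)⁻¹ * u⁻¹

private def spowFun {G : Type} [Group G] (fa : G → G) (v : G) : ℕ → G :=
  fun n => Nat.rec v (fun _ w => starFun fa w v) n

private lemma spowFun_zero {G : Type} [Group G] (fa : G → G) (v : G) :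
    spowFun fa v 0 = v := rfl

private lemma spowFun_succ {G : Type} [Group G] (fa : G → G) (v : G) (n : ℕ) :
    spowFun fa v (n + 1) = starFun fa (spowFun fa v n) v := rfl

set_option maxHeartbeats 1000000 in
private theorem ito_key : ∀ (n : ℕ) (G : Type) [Group G] [Finite G], Nat.card G ≤ n →
    Nontrivial G → ∀ (A B : Subgroup G), IsMulCommutative A → IsMulCommutative B →
    (∀ g : G, ∃ a ∈ A, ∃ b ∈ B, g = a * b) →
    ∃ K : Subgroup G, K.Normal ∧ K ≠ ⊥ ∧ (K ≤ A ∨ K ≤ B) := by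
  intro n
  induction n using Nat.strong_induction_on with
  | _ n IH =>
  intro G _ _ hcard hnt A B hA hB hAB
  haveI := hA; haveI := hB
  by_contra hcon
  have HA : ∀ K : Subgroup G, K.Normal → K ≤ A → K = ⊥ := by
    intro K hn hle
    by_contra hne
    exact hcon ⟨K, hn, hne, Or.inl hle⟩
  have HB : ∀ K : Subgroup G, K.Normal → K ≤ B → K = ⊥ := by
    intro K hn hle
    by_contra hne
    exact hcon ⟨K, hn, hne, Or.inr hle⟩
  have hAc : ∀ {x y : G}, x ∈ A → y ∈ A → x * y = y * x :=
    fun hx hy => A.mul_comm_of_mem_isMulCommutative hx hy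
  have hBc : ∀ {x y : G}, x ∈ B → y ∈ B → x * y = y * x :=
    fun hx hy => B.mul_comm_of_mem_isMulCommutative hx hy
  -- a small helper : y⁻¹ * x * y = x when x and y commute
  have conj_self : ∀ {x y : G}, x * y = y * x → y⁻¹ * x * y = x := by
    intro x y h
    rw [mul_assoc, h, ← mul_assoc, inv_mul_cancel, one_mul]
  have cmt_eq_one : ∀ {x y : G}, x * y = y * x → x⁻¹ * y⁻¹ * x * y = 1 := by
    intro x y h
    calc x⁻¹ * y⁻¹ * x * y = x⁻¹ * y⁻¹ * (x * y) := by group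
    _ = x⁻¹ * y⁻¹ * (y * x) := by rw [h]
    _ = 1 := by group
  -- choice of decompositions
  choose fa hfa fb hfb hg using hAB
  have hAB' : ∀ g : G, ∃ a ∈ A, ∃ b ∈ B, g = a * b :=
    fun g => ⟨fa g, hfa g, fb g, hfb g, hg g⟩
  -- the set of basic commutators
  set S : Set G := {x | ∃ a ∈ A, ∃ b ∈ B, x = a⁻¹ * b⁻¹ * a * b} with hSdef
  set D : Subgroup G := Subgroup.closure S with hDdef
  have hmemD : ∀ x ∈ S, x ∈ D := by
    intro x hx
    rw [hDdef]
    exact Subgroup.subset_closure hx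
  -- stability of S under conjugation
  have stabA : ∀ a ∈ A, ∀ x ∈ S, a⁻¹ * x * a ∈ S := by
    rintro a ha x ⟨a', ha', b', hb', rfl⟩
    obtain ⟨a2, ha2, b2, hb2, ht⟩ : ∃ a2 ∈ A, ∃ b2 ∈ B, a⁻¹ * b' * a = a2 * b2 :=
      ⟨_, hfa _, _, hfb _, hg _⟩
    refine ⟨a', ha', b2, hb2, ?_⟩
    have e1 : a⁻¹ * (a'⁻¹ * b'⁻¹ * a' * b') * a
        = (a⁻¹ * a' * a)⁻¹ * (a⁻¹ * b' * a)⁻¹ * (a⁻¹ * a' * a) * (a⁻¹ * b' * a) := by group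
    have e2 : a⁻¹ * a' * a = a' := conj_self (hAc ha' ha)
    rw [e1, e2, ht]
    have e3 : a'⁻¹ * (a2 * b2)⁻¹ * a' * (a2 * b2) = a'⁻¹ * b2⁻¹ * (a2⁻¹ * a' * a2) * b2 := by
      group
    have e4 : a2⁻¹ * a' * a2 = a' := conj_self (hAc ha' ha2)
    rw [e3, e4]
  have stabB : ∀ b ∈ B, ∀ x ∈ S, b⁻¹ * x * b ∈ S := by
    rintro b hb x ⟨a', ha', b', hb', rfl⟩
    obtain ⟨a4, ha4, b4, hb4, ht⟩ : ∃ a4 ∈ A, ∃ b4 ∈ B, (b⁻¹ * a' * b)⁻¹ = a4 * b4 :=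
      ⟨_, hfa _, _, hfb _, hg _⟩
    have ht' : b⁻¹ * a' * b = b4⁻¹ * a4⁻¹ := by
      rw [← mul_inv_rev, ← ht, inv_inv]
    refine ⟨a4⁻¹, A.inv_mem ha4, b', hb', ?_⟩
    have e1 : b⁻¹ * (a'⁻¹ * b'⁻¹ * a' * b') * b
        = (b⁻¹ * a' * b)⁻¹ * (b⁻¹ * b' * b)⁻¹ * (b⁻¹ * a' * b) * (b⁻¹ * b' * b) := by group
    have e2 : b⁻¹ * b' * b = b' := conj_self (hBc hb' hb)
    rw [e1, e2, ht']
    have e3 : (b4⁻¹ * a4⁻¹)⁻¹ * b'⁻¹ * (b4⁻¹ * a4⁻¹) * b'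
        = (a4⁻¹)⁻¹ * ((b4⁻¹)⁻¹ * b'⁻¹ * b4⁻¹) * a4⁻¹ * b' := by group
    have e4 : (b4⁻¹)⁻¹ * b'⁻¹ * b4⁻¹ = b'⁻¹ := conj_self (hBc (B.inv_mem hb') (B.inv_mem hb4))
    rw [e3, e4]
  have stabAll : ∀ (g : G), ∀ x ∈ S, g⁻¹ * x * g ∈ S := by
    intro g x hx
    obtain ⟨a, ha, b, hb, rfl⟩ := hAB' g
    have e : (a * b)⁻¹ * x * (a * b) = b⁻¹ * (a⁻¹ * x * a) * b := by group
    rw [e]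
    exact stabB b hb _ (stabA a ha x hx)
  -- conjugation stability of D
  have conjD : ∀ (g : G), ∀ x ∈ D, g⁻¹ * x * g ∈ D := by
    intro g x hx
    rw [hDdef] at hx ⊢
    induction hx using Subgroup.closure_induction with
    | mem y hy => exact Subgroup.subset_closure (stabAll g y hy)
    | one => simpa using Subgroup.one_mem _
    | mul y z hy hz ihy ihz =>
        have e : g⁻¹ * (y * z) * g = (g⁻¹ * y * g) * (g⁻¹ * z * g) := by group
        rw [e]; exact Subgroup.mul_mem _ ihy ihz
    | inv y hy ihy =>
        have e : g⁻¹ * y⁻¹ * g = (g⁻¹ * y * g)⁻¹ := by group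
        rw [e]; exact Subgroup.inv_mem _ ihy
  haveI hDn : D.Normal := by
    constructor
    intro x hx g
    have h2 : (g⁻¹)⁻¹ * x * g⁻¹ ∈ D := conjD g⁻¹ x hx
    have e : g * x * g⁻¹ = (g⁻¹)⁻¹ * x * g⁻¹ := by group
    rw [e]; exact h2
  -- the key identity : conjugation by a1*b1 and by b1*a1 agree on S
  have keyId : ∀ x ∈ S, ∀ a1 ∈ A, ∀ b1 ∈ B,
      (a1 * b1)⁻¹ * x * (a1 * b1) = (b1 * a1)⁻¹ * x * (b1 * a1) := by
    rintro x ⟨a, ha, b, hb, rfl⟩ a1 ha1 b1 hb1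
    obtain ⟨a2, ha2, b2, hb2, ht⟩ : ∃ a2 ∈ A, ∃ b2 ∈ B, a1⁻¹ * b * a1 = a2 * b2 :=
      ⟨_, hfa _, _, hfb _, hg _⟩
    obtain ⟨a4, ha4, b4, hb4, hu⟩ : ∃ a4 ∈ A, ∃ b4 ∈ B, (b1⁻¹ * a * b1)⁻¹ = a4 * b4 :=
      ⟨_, hfa _, _, hfb _, hg _⟩
    have hu' : b1⁻¹ * a * b1 = b4⁻¹ * a4⁻¹ := by
      rw [← mul_inv_rev, ← hu, inv_inv]
    have L1 : (a1 * b1)⁻¹ * (a⁻¹ * b⁻¹ * a * b) * (a1 * b1)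
        = b1⁻¹ * (a1⁻¹ * (a⁻¹ * b⁻¹ * a * b) * a1) * b1 := by group
    have L2 : a1⁻¹ * (a⁻¹ * b⁻¹ * a * b) * a1 = a⁻¹ * b2⁻¹ * a * b2 := by
      have e1 : a1⁻¹ * (a⁻¹ * b⁻¹ * a * b) * a1
          = (a1⁻¹ * a * a1)⁻¹ * (a1⁻¹ * b * a1)⁻¹ * (a1⁻¹ * a * a1) * (a1⁻¹ * b * a1) := by group
      have e2 : a1⁻¹ * a * a1 = a := conj_self (hAc ha ha1)
      rw [e1, e2, ht]
      have e3 : a⁻¹ * (a2 * b2)⁻¹ * a * (a2 * b2) = a⁻¹ * b2⁻¹ * (a2⁻¹ * a * a2) * b2 := by group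
      have e4 : a2⁻¹ * a * a2 = a := conj_self (hAc ha ha2)
      rw [e3, e4]
    have L3 : b1⁻¹ * (a⁻¹ * b2⁻¹ * a * b2) * b1 = (a4⁻¹)⁻¹ * b2⁻¹ * a4⁻¹ * b2 := by
      have e1 : b1⁻¹ * (a⁻¹ * b2⁻¹ * a * b2) * b1
          = (b1⁻¹ * a * b1)⁻¹ * (b1⁻¹ * b2 * b1)⁻¹ * (b1⁻¹ * a * b1) * (b1⁻¹ * b2 * b1) := by group
      have e2 : b1⁻¹ * b2 * b1 = b2 := conj_self (hBc hb2 hb1)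
      rw [e1, e2, hu']
      have e3 : (b4⁻¹ * a4⁻¹)⁻¹ * b2⁻¹ * (b4⁻¹ * a4⁻¹) * b2
          = (a4⁻¹)⁻¹ * ((b4⁻¹)⁻¹ * b2⁻¹ * b4⁻¹) * a4⁻¹ * b2 := by group
      have e4 : (b4⁻¹)⁻¹ * b2⁻¹ * b4⁻¹ = b2⁻¹ := conj_self (hBc (B.inv_mem hb2) (B.inv_mem hb4))
      rw [e3, e4]
    have R1 : (b1 * a1)⁻¹ * (a⁻¹ * b⁻¹ * a * b) * (b1 * a1)
        = a1⁻¹ * (b1⁻¹ * (a⁻¹ * b⁻¹ * a * b) * b1) * a1 := by group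
    have R2 : b1⁻¹ * (a⁻¹ * b⁻¹ * a * b) * b1 = (a4⁻¹)⁻¹ * b⁻¹ * a4⁻¹ * b := by
      have e1 : b1⁻¹ * (a⁻¹ * b⁻¹ * a * b) * b1
          = (b1⁻¹ * a * b1)⁻¹ * (b1⁻¹ * b * b1)⁻¹ * (b1⁻¹ * a * b1) * (b1⁻¹ * b * b1) := by group
      have e2 : b1⁻¹ * b * b1 = b := conj_self (hBc hb hb1)
      rw [e1, e2, hu']
      have e3 : (b4⁻¹ * a4⁻¹)⁻¹ * b⁻¹ * (b4⁻¹ * a4⁻¹) * b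
          = (a4⁻¹)⁻¹ * ((b4⁻¹)⁻¹ * b⁻¹ * b4⁻¹) * a4⁻¹ * b := by group
      have e4 : (b4⁻¹)⁻¹ * b⁻¹ * b4⁻¹ = b⁻¹ := conj_self (hBc (B.inv_mem hb) (B.inv_mem hb4))
      rw [e3, e4]
    have R3 : a1⁻¹ * ((a4⁻¹)⁻¹ * b⁻¹ * a4⁻¹ * b) * a1 = (a4⁻¹)⁻¹ * b2⁻¹ * a4⁻¹ * b2 := by
      have e1 : a1⁻¹ * ((a4⁻¹)⁻¹ * b⁻¹ * a4⁻¹ * b) * a1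
          = (a1⁻¹ * a4⁻¹ * a1)⁻¹ * (a1⁻¹ * b * a1)⁻¹ * (a1⁻¹ * a4⁻¹ * a1) * (a1⁻¹ * b * a1) := by
        group
      have e2 : a1⁻¹ * a4⁻¹ * a1 = a4⁻¹ := conj_self (hAc (A.inv_mem ha4) ha1)
      rw [e1, e2, ht]
      have e3 : (a4⁻¹)⁻¹ * (a2 * b2)⁻¹ * a4⁻¹ * (a2 * b2)
          = (a4⁻¹)⁻¹ * b2⁻¹ * (a2⁻¹ * a4⁻¹ * a2) * b2 := by group
      have e4 : a2⁻¹ * a4⁻¹ * a2 = a4⁻¹ := conj_self (hAc (A.inv_mem ha4) ha2)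
      rw [e3, e4]
    rw [L1, L2, L3, R1, R2, R3]
  -- generators of D commute
  have hSS : ∀ s ∈ S, ∀ t ∈ S, s * t = t * s := by
    intro s hs t ht
    obtain ⟨a1, ha1, b1, hb1, rfl⟩ := ht
    have hu : ((b1 * a1)⁻¹)⁻¹ * s * (b1 * a1)⁻¹ ∈ S := stabAll ((b1 * a1)⁻¹) s hs
    have key : (a1⁻¹ * b1⁻¹ * a1 * b1)⁻¹ * s * (a1⁻¹ * b1⁻¹ * a1 * b1) = s := by
      have e1 : (a1⁻¹ * b1⁻¹ * a1 * b1)⁻¹ * s * (a1⁻¹ * b1⁻¹ * a1 * b1)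
          = (a1 * b1)⁻¹ * (((b1 * a1)⁻¹)⁻¹ * s * (b1 * a1)⁻¹) * (a1 * b1) := by group
      rw [e1, keyId _ hu a1 ha1 b1 hb1]
      group
    calc s * (a1⁻¹ * b1⁻¹ * a1 * b1)
        = (a1⁻¹ * b1⁻¹ * a1 * b1) *
          ((a1⁻¹ * b1⁻¹ * a1 * b1)⁻¹ * s * (a1⁻¹ * b1⁻¹ * a1 * b1)) := by group
    _ = (a1⁻¹ * b1⁻¹ * a1 * b1) * s := by rw [key]
  -- D is commutative
  have hDc : ∀ {x y : G}, x ∈ D → y ∈ D → x * y = y * x := by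
    have hsD : ∀ s ∈ S, ∀ y ∈ D, s * y = y * s := by
      intro s hs y hy
      rw [hDdef] at hy
      induction hy using Subgroup.closure_induction with
      | mem t ht => exact hSS s hs t ht
      | one => rw [mul_one, one_mul]
      | mul y z hy hz ihy ihz => rw [← mul_assoc, ihy, mul_assoc, ihz, ← mul_assoc]
      | inv y hy ihy => exact (Commute.inv_right ihy :)
    intro x y hx hy
    rw [hDdef] at hx
    induction hx using Subgroup.closure_induction with
    | mem s hs => exact hsD s hs y hy
    | one => rw [one_mul, mul_one]
    | mul z w hz hw ihz ihw => rw [mul_assoc, ihw, ← mul_assoc, ihz, mul_assoc]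
    | inv z hz ihz => exact (Commute.inv_left ihz :)
  -- every commutator lies in D
  have hcmtD : ∀ g h : G, g⁻¹ * h⁻¹ * g * h ∈ D := by
    intro g h
    obtain ⟨ga, hga, gb, hgb, rfl⟩ := hAB' g
    obtain ⟨ha', hha, hb', hhb, rfl⟩ := hAB' h
    have e1 : (ga * gb)⁻¹ * (ha' * hb')⁻¹ * (ga * gb) * (ha' * hb')
        = (gb⁻¹ * (ga⁻¹ * (ha' * hb')⁻¹ * ga * (ha' * hb')) * gb) *
          (gb⁻¹ * (ha' * hb')⁻¹ * gb * (ha' * hb')) := by group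
    rw [e1]
    refine Subgroup.mul_mem _ (conjD gb _ ?_) ?_
    · have e2 : ga⁻¹ * (ha' * hb')⁻¹ * ga * (ha' * hb')
          = (ga⁻¹ * hb'⁻¹ * ga * hb') * (hb'⁻¹ * (ga⁻¹ * ha'⁻¹ * ga * ha') * hb') := by group
      rw [e2]
      refine Subgroup.mul_mem _ (hmemD _ ⟨ga, hga, hb', hhb, rfl⟩) ?_
      rw [cmt_eq_one (hAc hga hha), mul_one, inv_mul_cancel]
      exact Subgroup.one_mem _
    · have e2 : gb⁻¹ * (ha' * hb')⁻¹ * gb * (ha' * hb')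
          = (gb⁻¹ * hb'⁻¹ * gb * hb') * (hb'⁻¹ * (gb⁻¹ * ha'⁻¹ * gb * ha') * hb') := by group
      rw [e2]
      refine Subgroup.mul_mem _ ?_ (conjD hb' _ ?_)
      · rw [cmt_eq_one (hBc hgb hhb)]
        exact Subgroup.one_mem _
      · have e5 : gb⁻¹ * ha'⁻¹ * gb * ha' = (ha'⁻¹ * gb⁻¹ * ha' * gb)⁻¹ := by group
        rw [e5]
        exact Subgroup.inv_mem _ (hmemD _ ⟨ha', hha, gb, hgb, rfl⟩)
  -- every subgroup containing D is normal
  have normalOfLe : ∀ H : Subgroup G, D ≤ H → H.Normal := by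
    intro H hle
    constructor
    intro x hx g
    have e : g * x * g⁻¹ = x * (x⁻¹ * (g⁻¹)⁻¹ * x * g⁻¹) := by group
    rw [e]
    exact H.mul_mem hx (hle (hcmtD x g⁻¹))
  -- center ⊓ C is normal
  have hcenterInf : ∀ C : Subgroup G, (Subgroup.center G ⊓ C).Normal := by
    intro C
    constructor
    intro x hx g
    obtain ⟨h1, _h2⟩ := Subgroup.mem_inf.mp hx
    have e : g * x * g⁻¹ = x := by
      rw [Subgroup.mem_center_iff.mp h1 g, mul_assoc, mul_inv_cancel, mul_one]
    rw [e]; exact hx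
  have hZA : Subgroup.center G ⊓ A = ⊥ := HA _ (hcenterInf A) inf_le_right
  have hZB : Subgroup.center G ⊓ B = ⊥ := HB _ (hcenterInf B) inf_le_right
  have hBcentA : ∀ x, x ∈ B → x ∈ Subgroup.centralizer (A : Set G) →
      x ∈ Subgroup.center G := by
    intro x hxB hxC
    rw [Subgroup.mem_center_iff]
    intro g
    obtain ⟨a, ha, b, hb, rfl⟩ := hAB' g
    have h1 : a * x = x * a := hxC a ha
    have h2 : b * x = x * b := hBc hb hxB
    calc a * b * x = a * (b * x) := by rw [mul_assoc]
    _ = a * (x * b) := by rw [h2]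
    _ = (a * x) * b := by rw [mul_assoc]
    _ = (x * a) * b := by rw [h1]
    _ = x * (a * b) := by rw [mul_assoc]
  have hAcentB : ∀ x, x ∈ A → x ∈ Subgroup.centralizer (B : Set G) →
      x ∈ Subgroup.center G := by
    intro x hxA hxC
    rw [Subgroup.mem_center_iff]
    intro g
    obtain ⟨a, ha, b, hb, rfl⟩ := hAB' g
    have h1 : a * x = x * a := hAc ha hxA
    have h2 : b * x = x * b := hxC b hb
    calc a * b * x = a * (b * x) := by rw [mul_assoc]
    _ = a * (x * b) := by rw [h2]
    _ = (a * x) * b := by rw [mul_assoc]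
    _ = (x * a) * b := by rw [h1]
    _ = x * (a * b) := by rw [mul_assoc]
  have hcent : Subgroup.center G = ⊥ := by
    rw [Subgroup.eq_bot_iff_forall]
    intro z hz
    obtain ⟨a, ha, b, hb, hzab⟩ := hAB' z
    have hbC : b ∈ Subgroup.centralizer (A : Set G) := by
      rw [Subgroup.mem_centralizer_iff]
      intro a' ha'
      have h3 : z * a' = a' * z := (Subgroup.mem_center_iff.mp hz a').symm
      rw [hzab] at h3
      have h2 : a * (b * a') = a * (a' * b) := by
        calc a * (b * a') = (a * b) * a' := by rw [mul_assoc]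
        _ = a' * (a * b) := h3
        _ = (a' * a) * b := by rw [mul_assoc]
        _ = (a * a') * b := by rw [hAc ha' ha]
        _ = a * (a' * b) := by rw [mul_assoc]
      exact (mul_left_cancel h2).symm
    have hbcenter : b ∈ Subgroup.center G := hBcentA b hb hbC
    have hb1 : b = 1 := by
      have hbm : b ∈ Subgroup.center G ⊓ B := Subgroup.mem_inf.mpr ⟨hbcenter, hb⟩
      rw [hZB] at hbm
      exact Subgroup.mem_bot.mp hbm
    have hza : z = a := by rw [hzab, hb1, mul_one]
    have hzm : z ∈ Subgroup.center G ⊓ A :=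
      Subgroup.mem_inf.mpr ⟨hz, by rw [hza]; exact ha⟩
    rw [hZA] at hzm
    exact Subgroup.mem_bot.mp hzm
  have hCA : Subgroup.centralizer (A : Set G) = A := by
    apply le_antisymm
    · intro c hc
      obtain ⟨a, ha, b, hb, hce⟩ := hAB' c
      have haC : a ∈ Subgroup.centralizer (A : Set G) := by
        rw [Subgroup.mem_centralizer_iff]
        intro y hy
        exact hAc hy ha
      have hbC : b ∈ Subgroup.centralizer (A : Set G) := by
        have e : b = a⁻¹ * c := by rw [hce, ← mul_assoc, inv_mul_cancel, one_mul]
        rw [e]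
        exact Subgroup.mul_mem _ (Subgroup.inv_mem _ haC) hc
      have hbz : b ∈ Subgroup.center G := hBcentA b hb hbC
      rw [hcent] at hbz
      have hb1 : b = 1 := Subgroup.mem_bot.mp hbz
      rw [hce, hb1, mul_one]
      exact ha
    · intro a ha
      rw [Subgroup.mem_centralizer_iff]
      intro y hy
      exact hAc hy ha
  have hCB : Subgroup.centralizer (B : Set G) = B := by
    apply le_antisymm
    · intro c hc
      obtain ⟨a, ha, b, hb, hce⟩ := hAB' c
      have hbC : b ∈ Subgroup.centralizer (B : Set G) := by
        rw [Subgroup.mem_centralizer_iff]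
        intro y hy
        exact hBc hy hb
      have haC : a ∈ Subgroup.centralizer (B : Set G) := by
        have e : a = c * b⁻¹ := by rw [hce, mul_assoc, mul_inv_cancel, mul_one]
        rw [e]
        exact Subgroup.mul_mem _ hc (Subgroup.inv_mem _ hbC)
      have haz : a ∈ Subgroup.center G := hAcentB a ha haC
      rw [hcent] at haz
      have ha1 : a = 1 := Subgroup.mem_bot.mp haz
      rw [hce, ha1, one_mul]
      exact hb
    · intro b hb
      rw [Subgroup.mem_centralizer_iff]
      intro y hy
      exact hBc hy hb
  have hABbot : A ⊓ B = ⊥ := by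
    rw [Subgroup.eq_bot_iff_forall]
    intro x hx
    obtain ⟨hxA, hxB⟩ := Subgroup.mem_inf.mp hx
    have hxc : x ∈ Subgroup.center G := by
      refine hBcentA x hxB ?_
      rw [Subgroup.mem_centralizer_iff]
      intro y hy
      exact hAc hy hxA
    rw [hcent] at hxc
    exact Subgroup.mem_bot.mp hxc
  have hAne : A ≠ ⊥ := by
    intro hbot
    have hBall : ∀ g : G, g ∈ B := by
      intro g
      obtain ⟨a, ha, b, hb, hge⟩ := hAB' g
      rw [hbot] at ha
      rw [hge, Subgroup.mem_bot.mp ha, one_mul]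
      exact hb
    obtain ⟨x, hx⟩ := exists_ne (1 : G)
    have hxc : x ∈ Subgroup.center G :=
      Subgroup.mem_center_iff.mpr fun g => hBc (hBall g) (hBall x)
    rw [hcent] at hxc
    exact hx (Subgroup.mem_bot.mp hxc)
  have hDne : D ≠ ⊥ := by
    intro hbot
    have c1 : ∀ {u v : G}, u ∈ A → v ∈ B → u * v = v * u := by
      intro u v hu hv
      have hm : u⁻¹ * v⁻¹ * u * v ∈ D := hmemD _ ⟨u, hu, v, hv, rfl⟩
      rw [hbot] at hm
      have e := Subgroup.mem_bot.mp hm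
      calc u * v = (v * u) * (u⁻¹ * v⁻¹ * u * v) := by group
      _ = v * u := by rw [e, mul_one]
    have hcomm : ∀ x y : G, x * y = y * x := by
      intro x y
      obtain ⟨a, ha, b, hb, rfl⟩ := hAB' x
      obtain ⟨a', ha', b', hb', rfl⟩ := hAB' y
      calc (a * b) * (a' * b') = a * (b * a') * b' := by group
      _ = a * (a' * b) * b' := by rw [← c1 ha' hb]
      _ = (a * a') * (b * b') := by group
      _ = (a' * a) * (b' * b) := by rw [hAc ha ha', hBc hb hb']
      _ = a' * (a * b') * b := by group
      _ = a' * (b' * a) * b := by rw [c1 ha hb']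
      _ = (a' * b') * (a * b) := by group
    obtain ⟨x, hx⟩ := exists_ne (1 : G)
    have hxc : x ∈ Subgroup.center G := Subgroup.mem_center_iff.mpr fun g => hcomm g x
    rw [hcent] at hxc
    exact hx (Subgroup.mem_bot.mp hxc)
  -- membership in C ⊔ D
  have hADsup : ∀ (C : Subgroup G), ∀ x : G, x ∈ C ⊔ D ↔ ∃ c ∈ C, ∃ d ∈ D, x = c * d := by
    intro C x
    constructor
    · intro hx
      have hx' : x ∈ (↑(C ⊔ D) : Set G) := hx
      rw [Subgroup.mul_normal C D] at hx'
      obtain ⟨c, hc, d, hd, he⟩ := hx'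
      exact ⟨c, hc, d, hd, he.symm⟩
    · rintro ⟨c, hc, d, hd, rfl⟩
      exact Subgroup.mul_mem _ (Subgroup.mem_sup_left hc) (Subgroup.mem_sup_right hd)
  have hcentSupNormal : ∀ (C : Subgroup G),
      (Subgroup.centralizer ((C ⊔ D : Subgroup G) : Set G)).Normal := by
    intro C
    have hn : (C ⊔ D).Normal := normalOfLe _ le_sup_right
    constructor
    intro x hx g
    rw [Subgroup.mem_centralizer_iff] at hx ⊢
    intro y hy
    have hy' : g⁻¹ * y * g ∈ ((C ⊔ D : Subgroup G) : Set G) := by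
      have h0 := hn.conj_mem y hy g⁻¹
      have e : g⁻¹ * y * (g⁻¹)⁻¹ = g⁻¹ * y * g := by rw [inv_inv]
      rw [e] at h0
      exact h0
    have h2 := hx _ hy'
    calc y * (g * x * g⁻¹) = g * ((g⁻¹ * y * g) * x) * g⁻¹ := by group
    _ = g * (x * (g⁻¹ * y * g)) * g⁻¹ := by rw [h2]
    _ = (g * x * g⁻¹) * y := by group
  have hZADbot : Subgroup.centralizer ((A ⊔ D : Subgroup G) : Set G) = ⊥ := by
    refine HA _ (hcentSupNormal A) ?_
    calc Subgroup.centralizer ((A ⊔ D : Subgroup G) : Set G)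
        ≤ Subgroup.centralizer (A : Set G) :=
          Subgroup.centralizer_le (SetLike.coe_subset_coe.mpr le_sup_left)
    _ = A := hCA
  have hZBDbot : Subgroup.centralizer ((B ⊔ D : Subgroup G) : Set G) = ⊥ := by
    refine HB _ (hcentSupNormal B) ?_
    calc Subgroup.centralizer ((B ⊔ D : Subgroup G) : Set G)
        ≤ Subgroup.centralizer (B : Set G) :=
          Subgroup.centralizer_le (SetLike.coe_subset_coe.mpr le_sup_left)
    _ = B := hCB
  have hADbot : A ⊓ D = ⊥ := by
    rw [Subgroup.eq_bot_iff_forall]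
    intro x hx
    obtain ⟨hxA, hxD⟩ := Subgroup.mem_inf.mp hx
    have hxc : x ∈ Subgroup.centralizer ((A ⊔ D : Subgroup G) : Set G) := by
      rw [Subgroup.mem_centralizer_iff]
      intro y hy
      obtain ⟨a, ha, d, hd, rfl⟩ := (hADsup A y).mp hy
      have c1 : a * x = x * a := hAc ha hxA
      have c2 : d * x = x * d := hDc hd hxD
      calc a * d * x = a * (d * x) := by rw [mul_assoc]
      _ = a * (x * d) := by rw [c2]
      _ = (a * x) * d := by rw [mul_assoc]
      _ = (x * a) * d := by rw [c1]
      _ = x * (a * d) := by rw [mul_assoc]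
    rw [hZADbot] at hxc
    exact Subgroup.mem_bot.mp hxc
  have hBDbot : B ⊓ D = ⊥ := by
    rw [Subgroup.eq_bot_iff_forall]
    intro x hx
    obtain ⟨hxB, hxD⟩ := Subgroup.mem_inf.mp hx
    have hxc : x ∈ Subgroup.centralizer ((B ⊔ D : Subgroup G) : Set G) := by
      rw [Subgroup.mem_centralizer_iff]
      intro y hy
      obtain ⟨b, hb, d, hd, rfl⟩ := (hADsup B y).mp hy
      have c1 : b * x = x * b := hBc hb hxB
      have c2 : d * x = x * d := hDc hd hxD
      calc b * d * x = b * (d * x) := by rw [mul_assoc]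
      _ = b * (x * d) := by rw [c2]
      _ = (b * x) * d := by rw [mul_assoc]
      _ = (x * b) * d := by rw [c1]
      _ = x * (b * d) := by rw [mul_assoc]
    rw [hZBDbot] at hxc
    exact Subgroup.mem_bot.mp hxc
  by_cases hHtop : A ⊔ D = ⊤
  · -- final case : G = A ⋉ D, the "radical ring" argument
    have hADall : ∀ g : G, ∃ a ∈ A, ∃ d ∈ D, g = a * d := by
      intro g
      have hg' : g ∈ A ⊔ D := by rw [hHtop]; trivial
      exact (hADsup A g).mp hg'
    have huniq : ∀ {a d a' d' : G}, a ∈ A → d ∈ D → a' ∈ A → d' ∈ D →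
        a * d = a' * d' → a = a' ∧ d = d' := by
      intro a d a' d' ha hd ha' hd' he
      have h1 : a'⁻¹ * a = d' * d⁻¹ := by
        calc a'⁻¹ * a = a'⁻¹ * (a * d) * d⁻¹ := by group
        _ = a'⁻¹ * (a' * d') * d⁻¹ := by rw [he]
        _ = d' * d⁻¹ := by group
      have h2 : a'⁻¹ * a ∈ A ⊓ D := by
        refine Subgroup.mem_inf.mpr ⟨A.mul_mem (A.inv_mem ha') ha, ?_⟩
        rw [h1]
        exact D.mul_mem hd' (D.inv_mem hd)
      rw [hADbot] at h2
      have h3 : a'⁻¹ * a = 1 := Subgroup.mem_bot.mp h2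
      have h4 : a = a' := by
        calc a = a' * (a'⁻¹ * a) := by group
        _ = a' * 1 := by rw [h3]
        _ = a' := mul_one _
      refine ⟨h4, ?_⟩
      rw [h4] at he
      exact mul_left_cancel he
    have hfbeq : ∀ v : G, fb v = (fa v)⁻¹ * v := by
      intro v
      have e := hg v
      generalize h1 : fa v = x at e ⊢
      generalize h2 : fb v = y at e ⊢
      rw [e]; group
    have hBuniq : ∀ {x a d : G}, x ∈ B → a ∈ A → d ∈ D → x = a * d →
        x = fb d ∧ a = (fa d)⁻¹ := by
      intro x a d hx ha hd he
      have e2 : fb d = (fa d)⁻¹ * d := hfbeq d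
      have e3 : x * (fb d)⁻¹ = a * fa d := by
        rw [he, e2]; group
      have e4 : x * (fb d)⁻¹ ∈ A ⊓ B := by
        refine Subgroup.mem_inf.mpr ⟨?_, B.mul_mem hx (B.inv_mem (hfb d))⟩
        rw [e3]
        exact A.mul_mem ha (hfa d)
      rw [hABbot] at e4
      have e5 : x * (fb d)⁻¹ = 1 := Subgroup.mem_bot.mp e4
      have e6 : x = fb d := by
        calc x = (x * (fb d)⁻¹) * fb d := by group
        _ = 1 * fb d := by rw [e5]
        _ = fb d := one_mul _
      refine ⟨e6, ?_⟩
      have e7 : a * fa d = 1 := by rw [← e3, e5]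
      calc a = (a * fa d) * (fa d)⁻¹ := by group
      _ = 1 * (fa d)⁻¹ := by rw [e7]
      _ = (fa d)⁻¹ := one_mul _
    have hfa1 : fa (1 : G) = 1 := by
      have h1 : fb (1 : G) = (fa (1 : G))⁻¹ * 1 := hfbeq 1
      have h2 : fb (1 : G) ∈ A ⊓ B := by
        refine Subgroup.mem_inf.mpr ⟨?_, hfb 1⟩
        rw [h1, mul_one]
        exact A.inv_mem (hfa 1)
      rw [hABbot] at h2
      have h3 : fb (1 : G) = 1 := Subgroup.mem_bot.mp h2
      have h4 : (fa (1 : G))⁻¹ = 1 := by rw [← mul_one ((fa (1 : G))⁻¹), ← h1, h3]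
      calc fa (1 : G) = ((fa (1 : G))⁻¹)⁻¹ := by rw [inv_inv]
      _ = 1⁻¹ := by rw [h4]
      _ = 1 := inv_one
    have memStar : ∀ u, u ∈ D → ∀ v : G, starFun fa u v ∈ D := by
      intro u hu v
      have h1 : ((fa v)⁻¹)⁻¹ * u * (fa v)⁻¹ ∈ D := conjD ((fa v)⁻¹) u hu
      have e : starFun fa u v = (((fa v)⁻¹)⁻¹ * u * (fa v)⁻¹) * u⁻¹ := by
        show fa v * u * (fa v)⁻¹ * u⁻¹ = _
        group
      rw [e]
      exact D.mul_mem h1 (D.inv_mem hu)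
    have hcircD : ∀ u, u ∈ D → ∀ v, v ∈ D → fa v * u * (fa v)⁻¹ * v ∈ D := by
      intro u hu v hv
      have h1 : ((fa v)⁻¹)⁻¹ * u * (fa v)⁻¹ ∈ D := conjD ((fa v)⁻¹) u hu
      have e : fa v * u * (fa v)⁻¹ * v = (((fa v)⁻¹)⁻¹ * u * (fa v)⁻¹) * v := by group
      rw [e]
      exact D.mul_mem h1 hv
    have hcirc : ∀ u, u ∈ D → ∀ v, v ∈ D →
        fb (fa v * u * (fa v)⁻¹ * v) = fb u * fb v ∧
        (fa (fa v * u * (fa v)⁻¹ * v))⁻¹ = (fa u)⁻¹ * (fa v)⁻¹ := by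
      intro u hu v hv
      have he : fb u * fb v = ((fa u)⁻¹ * (fa v)⁻¹) * (fa v * u * (fa v)⁻¹ * v) := by
        rw [hfbeq u, hfbeq v]; group
      obtain ⟨h1, h2⟩ := hBuniq (B.mul_mem (hfb u) (hfb v))
        (A.mul_mem (A.inv_mem (hfa u)) (A.inv_mem (hfa v))) (hcircD u hu v hv) he
      exact ⟨h1.symm, h2.symm⟩
    have hbfinj : ∀ d, d ∈ D → ∀ d', d' ∈ D → fb d = fb d' → d = d' := by
      intro d hd d' hd' he
      have h1 : (fa d)⁻¹ * d = (fa d')⁻¹ * d' := by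
        rw [← hfbeq d, ← hfbeq d', he]
      exact (huniq (A.inv_mem (hfa d)) hd (A.inv_mem (hfa d')) hd' h1).2
    have sComm : ∀ u, u ∈ D → ∀ v, v ∈ D → starFun fa u v = starFun fa v u := by
      intro u hu v hv
      have hbb : fb u * fb v = fb v * fb u := hBc (hfb u) (hfb v)
      have h1 := hcirc u hu v hv
      have h2 := hcirc v hv u hu
      have hcc : fa v * u * (fa v)⁻¹ * v = fa u * v * (fa u)⁻¹ * u := by
        refine hbfinj _ (hcircD u hu v hv) _ (hcircD v hv u hu) ?_
        rw [h1.1, h2.1, hbb]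
      show fa v * u * (fa v)⁻¹ * u⁻¹ = fa u * v * (fa u)⁻¹ * v⁻¹
      calc fa v * u * (fa v)⁻¹ * u⁻¹
          = (fa v * u * (fa v)⁻¹ * v) * (v⁻¹ * u⁻¹) := by group
      _ = (fa u * v * (fa u)⁻¹ * u) * (v⁻¹ * u⁻¹) := by rw [hcc]
      _ = (fa u * v * (fa u)⁻¹ * u) * (u⁻¹ * v⁻¹) := by
            rw [hDc (D.inv_mem hv) (D.inv_mem hu)]
      _ = fa u * v * (fa u)⁻¹ * v⁻¹ := by group
    have sAddLeft : ∀ u1, u1 ∈ D → ∀ u2, u2 ∈ D → ∀ v, v ∈ D →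
        starFun fa (u1 * u2) v = starFun fa u1 v * starFun fa u2 v := by
      intro u1 h1 u2 h2 v hv
      have e1 : starFun fa (u1 * u2) v
          = (fa v * u1 * (fa v)⁻¹) * ((starFun fa u2 v) * u1⁻¹) := by
        show fa v * (u1 * u2) * (fa v)⁻¹ * (u1 * u2)⁻¹
            = (fa v * u1 * (fa v)⁻¹) * ((fa v * u2 * (fa v)⁻¹ * u2⁻¹) * u1⁻¹)
        group
      rw [e1, hDc (memStar u2 h2 v) (D.inv_mem h1)]
      show (fa v * u1 * (fa v)⁻¹) * (u1⁻¹ * (fa v * u2 * (fa v)⁻¹ * u2⁻¹))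
          = (fa v * u1 * (fa v)⁻¹ * u1⁻¹) * (fa v * u2 * (fa v)⁻¹ * u2⁻¹)
      group
    have sAddRight : ∀ u, u ∈ D → ∀ v, v ∈ D → ∀ w, w ∈ D →
        starFun fa u (v * w) = starFun fa u v * starFun fa u w := by
      intro u hu v hv w hw
      rw [sComm u hu _ (D.mul_mem hv hw), sAddLeft v hv w hw u hu,
          sComm v hv u hu, sComm w hw u hu]
    have sAssoc : ∀ u, u ∈ D → ∀ v, v ∈ D → ∀ w, w ∈ D →
        starFun fa (starFun fa u v) w = starFun fa u (starFun fa v w) := by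
      intro u hu v hv w hw
      have hfaeq := (hcirc v hv w hw).2
      have hfc : fa (fa w * v * (fa w)⁻¹ * w) = fa w * fa v := by
        have h0 := congrArg (fun t : G => t⁻¹) hfaeq
        simpa [mul_inv_rev] using h0
      have E1 : starFun fa u (fa w * v * (fa w)⁻¹ * w)
          = starFun fa (starFun fa u v) w * starFun fa u v * starFun fa u w := by
        show fa (fa w * v * (fa w)⁻¹ * w) * u * (fa (fa w * v * (fa w)⁻¹ * w))⁻¹ * u⁻¹ = _
        rw [hfc]
        show fa w * fa v * u * (fa w * fa v)⁻¹ * u⁻¹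
            = (fa w * (fa v * u * (fa v)⁻¹ * u⁻¹) * (fa w)⁻¹ *
                (fa v * u * (fa v)⁻¹ * u⁻¹)⁻¹) *
              (fa v * u * (fa v)⁻¹ * u⁻¹) * (fa w * u * (fa w)⁻¹ * u⁻¹)
        group
      have E2 : starFun fa u (fa w * v * (fa w)⁻¹ * w)
          = starFun fa u v * starFun fa u (starFun fa v w) * starFun fa u w := by
        have e0 : fa w * v * (fa w)⁻¹ * w = (starFun fa v w) * (v * w) := by
          show _ = (fa w * v * (fa w)⁻¹ * v⁻¹) * (v * w)
          group
        rw [e0]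
        rw [sAddRight u hu _ (memStar v hv w) _ (D.mul_mem hv hw)]
        rw [sAddRight u hu v hv w hw]
        calc starFun fa u (starFun fa v w) * (starFun fa u v * starFun fa u w)
            = (starFun fa u (starFun fa v w) * starFun fa u v) * starFun fa u w := by
              rw [mul_assoc]
        _ = (starFun fa u v * starFun fa u (starFun fa v w)) * starFun fa u w := by
              rw [hDc (memStar u hu _) (memStar u hu v)]
        _ = starFun fa u v * starFun fa u (starFun fa v w) * starFun fa u w := rfl
      have E3 : starFun fa (starFun fa u v) w * starFun fa u v * starFun fa u w
          = starFun fa u v * starFun fa u (starFun fa v w) * starFun fa u w := by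
        rw [← E1, ← E2]
      have E4 := mul_right_cancel E3
      have E5 : starFun fa u v * starFun fa (starFun fa u v) w
          = starFun fa u v * starFun fa u (starFun fa v w) := by
        rw [hDc (memStar u hu v) (memStar (starFun fa u v) (memStar u hu v) w)]
        exact E4
      exact mul_left_cancel E5
    have hspowD : ∀ v, v ∈ D → ∀ n : ℕ, spowFun fa v n ∈ D := by
      intro v hv n
      induction n with
      | zero => rw [spowFun_zero]; exact hv
      | succ n ih => rw [spowFun_succ]; exact memStar _ ih v
    have hspow_add : ∀ v, v ∈ D → ∀ m n : ℕ,
        spowFun fa v (m + n + 1) = starFun fa (spowFun fa v m) (spowFun fa v n) := by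
      intro v hv m n
      induction n with
      | zero => rw [spowFun_zero, Nat.add_zero, spowFun_succ]
      | succ n ih =>
        rw [show m + (n + 1) + 1 = (m + n + 1) + 1 by omega, spowFun_succ, ih,
          spowFun_succ]
        exact sAssoc _ (hspowD v hv m) _ (hspowD v hv n) v hv
    have hstar1 : ∀ u : G, starFun fa u 1 = 1 := by
      intro u
      show fa 1 * u * (fa 1)⁻¹ * u⁻¹ = 1
      rw [hfa1]
      group
    have hstar1L : ∀ v : G, starFun fa (1 : G) v = 1 := by
      intro v
      show fa v * 1 * (fa v)⁻¹ * 1⁻¹ = 1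
      group
    have hidem : ∀ e, e ∈ D → starFun fa e e = e → e = 1 := by
      intro e he hid
      have hinv : starFun fa e (e⁻¹) = (starFun fa e e)⁻¹ := by
        have h1 : starFun fa e (e * e⁻¹) = starFun fa e e * starFun fa e (e⁻¹) :=
          sAddRight e he e he e⁻¹ (D.inv_mem he)
        rw [mul_inv_cancel, hstar1] at h1
        exact (inv_eq_of_mul_eq_one_right h1.symm).symm
      have hconj : fa (e⁻¹) * e * (fa (e⁻¹))⁻¹ = 1 := by
        have e1 : fa (e⁻¹) * e * (fa (e⁻¹))⁻¹ = (starFun fa e (e⁻¹)) * e := by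
          show _ = (fa (e⁻¹) * e * (fa (e⁻¹))⁻¹ * e⁻¹) * e
          group
        rw [e1, hinv, hid]
        group
      calc e = (fa (e⁻¹))⁻¹ * (fa (e⁻¹) * e * (fa (e⁻¹))⁻¹) * fa (e⁻¹) := by group
      _ = (fa (e⁻¹))⁻¹ * 1 * fa (e⁻¹) := by rw [hconj]
      _ = 1 := by group
    have hnil : ∀ v, v ∈ D → ∃ N : ℕ, spowFun fa v N = 1 := by
      intro v hv
      have main : ∀ i j : ℕ, i < j → spowFun fa v i = spowFun fa v j →
          ∃ N : ℕ, spowFun fa v N = 1 := by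
        intro i j hlt heq
        have hd1 : 1 ≤ j - i := by omega
        have hji : j = i + (j - i) := by omega
        have hper : ∀ k, i ≤ k → spowFun fa v k = spowFun fa v (k + (j - i)) := by
          intro k hk
          induction k, hk using Nat.le_induction with
          | base => rw [← hji]; exact heq
          | succ k hk ih =>
            rw [spowFun_succ, ih, show k + 1 + (j - i) = (k + (j - i)) + 1 by omega,
              spowFun_succ]
        have hper2 : ∀ t k, i ≤ k → spowFun fa v k = spowFun fa v (k + t * (j - i)) := by
          intro t
          induction t with
          | zero => intro k hk; simp
          | succ t ih =>
            intro k hk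
            rw [show k + (t + 1) * (j - i) = (k + t * (j - i)) + (j - i) by ring]
            rw [← hper (k + t * (j - i)) (by omega)]
            exact ih k hk
        obtain ⟨P, hPeq⟩ : ∃ P : ℕ, P = (i + 1) * (j - i) := ⟨_, rfl⟩
        have hmul : i + 1 ≤ P := by
          rw [hPeq]
          exact Nat.le_mul_of_pos_right _ (by omega)
        obtain ⟨N, hNi, hNd⟩ : ∃ N : ℕ, i ≤ N ∧ N + N + 1 = N + P :=
          ⟨P - 1, by omega, by omega⟩
        have hide : starFun fa (spowFun fa v N) (spowFun fa v N) = spowFun fa v N := by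
          rw [← hspow_add v hv N N, hNd, hPeq]
          exact (hper2 (i + 1) N hNi).symm
        exact ⟨N, hidem _ (hspowD v hv N) hide⟩
      obtain ⟨i, j, hij, he⟩ := Finite.exists_ne_map_eq_of_infinite
        (fun n : ℕ => (⟨spowFun fa v n, hspowD v hv n⟩ : {x : G // x ∈ D}))
      have heq : spowFun fa v i = spowFun fa v j := congrArg Subtype.val he
      rcases Nat.lt_or_ge i j with h | h
      · exact main i j h heq
      · exact main j i (by omega) heq.symm
    obtain ⟨v0, hv0D, hv0ne⟩ : ∃ v0, v0 ∈ D ∧ v0 ≠ 1 := by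
      by_contra hno
      push_neg at hno
      exact hDne ((Subgroup.eq_bot_iff_forall D).mpr fun x hx => hno x hx)
    have hann : ∀ z, z ∈ D → (∀ u, u ∈ D → starFun fa u z = 1) → z = 1 := by
      intro z hz hzann
      have hfz : ∀ u, u ∈ D → u * fa z = fa z * u := by
        intro u hu
        have h0 := hzann u hu
        have e : fa z * u = u * fa z := by
          calc fa z * u = (fa z * u * (fa z)⁻¹ * u⁻¹) * (u * fa z) := by group
          _ = (starFun fa u z) * (u * fa z) := rfl
          _ = 1 * (u * fa z) := by rw [h0]
          _ = u * fa z := one_mul _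
        exact e.symm
      have hfzc : fa z ∈ Subgroup.center G := by
        rw [Subgroup.mem_center_iff]
        intro g
        obtain ⟨a, ha, d, hd, rfl⟩ := hADall g
        have c1 : a * fa z = fa z * a := hAc ha (hfa z)
        have c2 : d * fa z = fa z * d := hfz d hd
        calc a * d * fa z = a * (d * fa z) := by rw [mul_assoc]
        _ = a * (fa z * d) := by rw [c2]
        _ = (a * fa z) * d := by rw [mul_assoc]
        _ = (fa z * a) * d := by rw [c1]
        _ = fa z * (a * d) := by rw [mul_assoc]
      rw [hcent] at hfzc
      have hfz1 : fa z = 1 := Subgroup.mem_bot.mp hfzc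
      have hzB : z ∈ B ⊓ D := by
        refine Subgroup.mem_inf.mpr ⟨?_, hz⟩
        have h1 := hfb z
        rw [hfbeq z, hfz1, inv_one, one_mul] at h1
        exact h1
      rw [hBDbot] at hzB
      exact Subgroup.mem_bot.mp hzB
    by_cases hex : ∃ z, z ∈ D ∧ z ≠ 1 ∧ ∀ u, u ∈ D → starFun fa u z = 1
    · obtain ⟨z, hz, hzne, hzann⟩ := hex
      exact hzne (hann z hz hzann)
    · push_neg at hex
      have hstep : ∀ z : {x : G // x ∈ D ∧ x ≠ 1},
          ∃ u, u ∈ D ∧ starFun fa u z.1 ≠ 1 := fun z => hex z.1 z.2.1 z.2.2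
      choose uf huf hufne using hstep
      set F : {x : G // x ∈ D ∧ x ≠ 1} → {x : G // x ∈ D ∧ x ≠ 1} :=
        fun z => ⟨starFun fa (uf z) z.1, memStar _ (huf z) _, hufne z⟩ with hF
      have hFval : ∀ z, (F z).1 = starFun fa (uf z) z.1 := fun z => rfl
      have hreg : ∀ (k : ℕ) (z : {x : G // x ∈ D ∧ x ≠ 1}),
          ∃ w, w ∈ D ∧ (F^[k + 1] z).1 = starFun fa w z.1 := by
        intro k
        induction k with
        | zero =>
          intro z
          refine ⟨uf z, huf z, ?_⟩
          have h0 : F^[0 + 1] z = F z := by norm_num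
          rw [h0]
        | succ k ih =>
          intro z
          obtain ⟨w, hw, he⟩ := ih (F z)
          refine ⟨starFun fa w (uf z), memStar w hw _, ?_⟩
          have e0 : F^[k + 1 + 1] z = F^[k + 1] (F z) := by
            rw [Function.iterate_succ_apply]
          rw [e0, he, hFval z]
          exact (sAssoc w hw (uf z) (huf z) z.1 z.2.1).symm
      have main2 : ∀ i j : ℕ, i < j →
          F^[i] ⟨v0, hv0D, hv0ne⟩ = F^[j] ⟨v0, hv0D, hv0ne⟩ → False := by
        intro i j hlt he
        set z := F^[i] (⟨v0, hv0D, hv0ne⟩ : {x : G // x ∈ D ∧ x ≠ 1}) with hzdef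
        have e1 : F^[j] (⟨v0, hv0D, hv0ne⟩ : {x : G // x ∈ D ∧ x ≠ 1})
            = F^[(j - i - 1) + 1] z := by
          rw [hzdef, ← Function.iterate_add_apply]
          congr 1
          omega
        obtain ⟨w, hw, he2⟩ := hreg (j - i - 1) z
        have he3 : z.1 = starFun fa w z.1 := by
          calc z.1 = (F^[j] (⟨v0, hv0D, hv0ne⟩ : {x : G // x ∈ D ∧ x ≠ 1})).1 := by
                rw [← he]
          _ = (F^[(j - i - 1) + 1] z).1 := by rw [e1]
          _ = starFun fa w z.1 := he2
        have hiter : ∀ t : ℕ, z.1 = starFun fa (spowFun fa w t) z.1 := by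
          intro t
          induction t with
          | zero => rw [spowFun_zero]; exact he3
          | succ t ih =>
            have e4 : starFun fa (spowFun fa w (t + 1)) z.1
                = starFun fa (spowFun fa w t) (starFun fa w z.1) := by
              rw [spowFun_succ]
              exact sAssoc _ (hspowD w hw t) w hw z.1 z.2.1
            rw [e4, ← he3]
            exact ih
        obtain ⟨N, hN⟩ := hnil w hw
        have h5 := hiter N
        rw [hN, hstar1L] at h5
        exact z.2.2 h5
      obtain ⟨i, j, hij, hSeq⟩ := Finite.exists_ne_map_eq_of_infinite
        (fun n : ℕ => F^[n] (⟨v0, hv0D, hv0ne⟩ : {x : G // x ∈ D ∧ x ≠ 1}))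
      rcases Nat.lt_or_ge i j with h | h
      · exact main2 i j h hSeq
      · exact main2 j i (by omega) hSeq.symm
  · -- case A ⊔ D ≠ ⊤ : apply the induction hypothesis to H := A ⊔ D
    set H : Subgroup G := A ⊔ D with hHdef
    obtain ⟨g0, hg0⟩ : ∃ g0 : G, g0 ∉ H := by
      by_contra hall
      push_neg at hall
      exact hHtop (by rw [eq_top_iff]; intro x _; exact hall x)
    have hcardlt : Nat.card ↥H < Nat.card G := by
      have h1 : (H : Set G) ⊂ Set.univ := by
        rw [Set.ssubset_univ_iff]
        intro he
        exact hg0 (by rw [← SetLike.mem_coe, he]; trivial)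
      have h2 : (H : Set G).ncard < (Set.univ : Set G).ncard :=
        Set.ncard_lt_ncard h1 Set.finite_univ
      rw [Set.ncard_univ] at h2
      calc Nat.card ↥H = (H : Set G).ncard := Nat.card_coe_set_eq (H : Set G)
      _ < Nat.card G := h2
    have hntH : Nontrivial ↥H := by
      obtain ⟨a0, ha0A, ha0ne⟩ : ∃ a0, a0 ∈ A ∧ a0 ≠ 1 := by
        by_contra hno
        push_neg at hno
        exact hAne ((Subgroup.eq_bot_iff_forall A).mpr fun x hx => hno x hx)
      refine ⟨⟨a0, Subgroup.mem_sup_left ha0A⟩, ⟨1, H.one_mem⟩, ?_⟩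
      simp only [ne_eq, Subtype.mk.injEq]
      exact ha0ne
    haveI hBHc : IsMulCommutative ↥(B ⊓ H) :=
      ⟨⟨fun x y => Subtype.ext
        (hBc (Subgroup.mem_inf.mp x.2).1 (Subgroup.mem_inf.mp y.2).1)⟩⟩
    have hfact : ∀ h : ↥H, ∃ a' ∈ A.subgroupOf H, ∃ b' ∈ (B ⊓ H).subgroupOf H,
        h = a' * b' := by
      intro h
      obtain ⟨a, ha, b, hb, he⟩ := hAB' (h : G)
      have haH : a ∈ H := Subgroup.mem_sup_left ha
      have hbH : b ∈ H := by
        have e : b = a⁻¹ * (h : G) := by rw [he, ← mul_assoc, inv_mul_cancel, one_mul]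
        rw [e]
        exact H.mul_mem (H.inv_mem haH) h.2
      refine ⟨⟨a, haH⟩, ?_, ⟨b, hbH⟩, ?_, ?_⟩
      · rw [Subgroup.mem_subgroupOf]; exact ha
      · rw [Subgroup.mem_subgroupOf]; exact Subgroup.mem_inf.mpr ⟨hb, hbH⟩
      · exact Subtype.ext he
    obtain ⟨K', hK'n, hK'ne, hK'le⟩ :=
      IH (Nat.card ↥H) (lt_of_lt_of_le hcardlt hcard) ↥H le_rfl hntH
        (A.subgroupOf H) ((B ⊓ H).subgroupOf H) inferInstance inferInstance hfact
    set M : Subgroup G := K'.map H.subtype with hMdef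
    have hMne : M ≠ ⊥ := by
      intro hbot
      rw [hMdef] at hbot
      rw [Subgroup.map_eq_bot_iff_of_injective _ (Subgroup.subtype_injective H)] at hbot
      exact hK'ne hbot
    have hMconj : ∀ h ∈ H, ∀ m ∈ M, h⁻¹ * m * h ∈ M := by
      intro h hh m hm
      rw [hMdef] at hm ⊢
      obtain ⟨m', hm', rfl⟩ := hm
      have h0 := hK'n.conj_mem m' hm' (⟨h, hh⟩ : ↥H)⁻¹
      refine ⟨_, h0, ?_⟩
      simp
    have hMcent : ∀ m ∈ M, ∀ y ∈ H, m⁻¹ * y⁻¹ * m * y ∈ M ⊓ D := by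
      intro m hm y hy
      refine Subgroup.mem_inf.mpr ⟨?_, hcmtD m y⟩
      have h1 : y⁻¹ * m * y ∈ M := hMconj y hy m hm
      have e : m⁻¹ * y⁻¹ * m * y = m⁻¹ * (y⁻¹ * m * y) := by group
      rw [e]
      exact M.mul_mem (M.inv_mem hm) h1
    rcases hK'le with hKA | hKB
    · have hMA : M ≤ A := by
        rw [hMdef]
        calc Subgroup.map H.subtype K' ≤ Subgroup.map H.subtype (A.subgroupOf H) :=
          Subgroup.map_mono hKA
        _ = A ⊓ H := Subgroup.subgroupOf_map_subtype A H
        _ ≤ A := inf_le_left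
      have hMbot : M = ⊥ := by
        rw [Subgroup.eq_bot_iff_forall]
        intro m hm
        have hcentH : m ∈ Subgroup.centralizer (H : Set G) := by
          rw [Subgroup.mem_centralizer_iff]
          intro y hy
          have h3 := hMcent m hm y hy
          have h4 : m⁻¹ * y⁻¹ * m * y ∈ A ⊓ D :=
            Subgroup.mem_inf.mpr ⟨hMA (Subgroup.mem_inf.mp h3).1, (Subgroup.mem_inf.mp h3).2⟩
          rw [hADbot] at h4
          have h5 : m⁻¹ * y⁻¹ * m * y = 1 := Subgroup.mem_bot.mp h4
          calc y * m = m * y * (m⁻¹ * y⁻¹ * m * y)⁻¹ := by group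
          _ = m * y * 1⁻¹ := by rw [h5]
          _ = m * y := by group
        rw [hZADbot] at hcentH
        exact Subgroup.mem_bot.mp hcentH
      exact hMne hMbot
    · have hMB : M ≤ B := by
        rw [hMdef]
        calc Subgroup.map H.subtype K' ≤ Subgroup.map H.subtype ((B ⊓ H).subgroupOf H) :=
          Subgroup.map_mono hKB
        _ = (B ⊓ H) ⊓ H := Subgroup.subgroupOf_map_subtype (B ⊓ H) H
        _ ≤ B := le_trans inf_le_left inf_le_left
      have hMbot : M = ⊥ := by
        rw [Subgroup.eq_bot_iff_forall]
        intro m hm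
        have hcentA : m ∈ Subgroup.centralizer (A : Set G) := by
          rw [Subgroup.mem_centralizer_iff]
          intro y hy
          have hyH : y ∈ H := Subgroup.mem_sup_left hy
          have h3 := hMcent m hm y hyH
          have h4 : m⁻¹ * y⁻¹ * m * y ∈ B ⊓ D :=
            Subgroup.mem_inf.mpr ⟨hMB (Subgroup.mem_inf.mp h3).1, (Subgroup.mem_inf.mp h3).2⟩
          rw [hBDbot] at h4
          have h5 : m⁻¹ * y⁻¹ * m * y = 1 := Subgroup.mem_bot.mp h4
          calc y * m = m * y * (m⁻¹ * y⁻¹ * m * y)⁻¹ := by group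
          _ = m * y * 1⁻¹ := by rw [h5]
          _ = m * y := by group
        have hmz : m ∈ Subgroup.center G := hBcentA m (hMB hm) hcentA
        rw [hcent] at hmz
        exact Subgroup.mem_bot.mp hmz
      exact hMne hMbot

/-- (Itô) If a nontrivial finite group `G` is the product of two abelian subgroups
`A` and `B`, then `A` or `B` contains a nontrivial normal subgroup of `G`. -/
theorem stmt2 (G : Type) [Group G] [Fintype G] [Nontrivial G]
    (A B : Subgroup G) (hA : IsMulCommutative A) (hB : IsMulCommutative B)
    (hAB : ∀ g : G, ∃ a ∈ A, ∃ b ∈ B, g = a * b) :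
    ∃ K : Subgroup G, K.Normal ∧ K ≠ ⊥ ∧ (K ≤ A ∨ K ≤ B) := by
  exact ito_key (Nat.card G) G le_rfl inferInstance A B hA hB hAB
end

section
/- Let G be a finite group, N ⊴ G, and M ⊴ G with N ≤ M such that N is a Hall subgroup of M (gcd(|N|,|M:N|)=1) and M/N is solvable. Let Q be a complement of N in M. Then G = N·N_G(Q) and N ∩ N_G(Q) = C_N(Q). -/
open Subgroup Pointwise

section ConjS
variable {G : Type*} [Group G]

def conjS (g : G) (H : Subgroup G) : Subgroup G := H.map (MulAut.conj g).toMonoidHom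

theorem mem_conjS {g x : G} {H : Subgroup G} : x ∈ conjS g H ↔ g⁻¹ * x * g ∈ H := by
  constructor
  · rintro ⟨h, hh, rfl⟩
    simpa [MulAut.conj_apply, mul_assoc] using hh
  · intro hx
    exact ⟨g⁻¹ * x * g, hx, by simp [MulAut.conj_apply, mul_assoc]⟩

theorem conjS_conjS (g₁ g₂ : G) (H : Subgroup G) :
    conjS g₁ (conjS g₂ H) = conjS (g₁ * g₂) H := by
  ext x; simp only [mem_conjS, mul_inv_rev, mul_assoc]

@[simp] theorem conjS_one (H : Subgroup G) : conjS 1 H = H := by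
  ext x; simp [mem_conjS]

theorem conjS_inf (g : G) (H K : Subgroup G) :
    conjS g (H ⊓ K) = conjS g H ⊓ conjS g K := by
  ext x; simp [mem_conjS]

theorem conjS_eq_self_of_normal (g : G) (H : Subgroup G) [h : H.Normal] :
    conjS g H = H := by
  ext x
  rw [mem_conjS]
  exact ⟨fun hx => by simpa [mul_assoc] using h.conj_mem _ hx g,
    fun hx => by simpa [mul_assoc] using h.conj_mem _ hx g⁻¹⟩

theorem card_conjS (g : G) (H : Subgroup G) : Nat.card (conjS g H) = Nat.card H :=
  (Nat.card_congr (Subgroup.equivMapOfInjective H _ (MulAut.conj g).injective).toEquiv).symm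

theorem conjS_mono (g : G) {H K : Subgroup G} (h : H ≤ K) : conjS g H ≤ conjS g K :=
  Subgroup.map_mono h

theorem conjS_bot (g : G) : conjS g (⊥ : Subgroup G) = ⊥ := by
  ext x
  rw [mem_conjS, Subgroup.mem_bot, Subgroup.mem_bot]
  constructor
  · intro hx
    have : x = g * (g⁻¹ * x * g) * g⁻¹ := by group
    rw [this, hx]; group
  · rintro rfl; group

theorem isComplement'_conjS [Finite G] {N H : Subgroup G} (hc : IsComplement' N H) (g : G) :
    IsComplement' (conjS g N) (conjS g H) := by
  refine isComplement'_of_card_mul_and_disjoint ?_ ?_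
  · rw [card_conjS, card_conjS]; exact hc.card_mul
  · rw [disjoint_iff, ← conjS_inf, disjoint_iff.mp hc.disjoint, conjS_bot]

theorem map_conjS {G' : Type*} [Group G'] (f : G →* G') (g : G) (H : Subgroup G) :
    (conjS g H).map f = conjS (f g) (H.map f) := by
  ext x
  simp only [Subgroup.mem_map, mem_conjS]
  constructor
  · rintro ⟨y, hy, rfl⟩
    exact ⟨g⁻¹ * y * g, hy, by simp [mul_assoc]⟩
  · rintro ⟨y, hy, hxy⟩
    refine ⟨g * y * g⁻¹, by simpa [mul_assoc] using hy, ?_⟩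
    have : x = f g * f y * (f g)⁻¹ := by
      rw [hxy]; group
    simp [this, map_mul, mul_assoc]

theorem conjS_eq_self_iff_mem_normalizer {g : G} {H : Subgroup G} :
    conjS g H = H ↔ g ∈ Subgroup.normalizer (H : Set G) := by
  rw [mem_normalizer_iff]
  constructor
  · intro h x
    have h1 := Subgroup.ext_iff.mp h (g * x * g⁻¹)
    rw [mem_conjS] at h1
    simpa [mul_assoc] using h1
  · intro h
    ext x
    rw [mem_conjS]
    have h1 := h (g⁻¹ * x * g)
    simpa [mul_assoc] using h1

theorem mulAut_conj_smul_eq_conjS (g : G) (H : Subgroup G) :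
    MulAut.conj g • H = conjS g H := by
  ext x
  rw [Subgroup.mem_pointwise_smul_iff_inv_smul_mem, mem_conjS]
  have : (MulAut.conj g)⁻¹ • x = g⁻¹ * x * g := by
    simp [MulAut.smul_def, mul_assoc]
  rw [this]

end ConjS

section Helpers
variable {G : Type*} [Group G]

theorem card_subgroupOf_of_le {H T : Subgroup G} (h : H ≤ T) :
    Nat.card (H.subgroupOf T) = Nat.card H :=
  Nat.card_congr (Subgroup.subgroupOfEquivOfLe h).toEquiv

theorem isComplement'_subgroupOf {N H : Subgroup G} (T : Subgroup G)
    (hc : IsComplement' N H) (hHT : H ≤ T) :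
    IsComplement' (N.subgroupOf T) (H.subgroupOf T) := by
  apply isComplement'_of_disjoint_and_mul_eq_univ
  · rw [disjoint_iff, eq_bot_iff]
    rintro x ⟨h1, h2⟩
    have hx : (x : G) ∈ N ⊓ H := ⟨h1, h2⟩
    rw [disjoint_iff.mp hc.disjoint, Subgroup.mem_bot] at hx
    simpa [Subgroup.mem_bot] using Subtype.ext hx
  · rw [Set.eq_univ_iff_forall]
    intro t
    obtain ⟨⟨n, h⟩, hnh⟩ := hc.2 (t : G)
    have hhT : (h : G) ∈ T := hHT h.2
    have hnT : (n : G) ∈ T := by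
      have : (n : G) = (t : G) * (h : G)⁻¹ := by rw [← hnh]; group
      rw [this]; exact T.mul_mem t.2 (T.inv_mem hhT)
    refine ⟨⟨(n : G), hnT⟩, ?_, ⟨(h : G), hhT⟩, ?_, ?_⟩
    · exact n.2
    · exact h.2
    · exact Subtype.ext hnh
  
theorem isComplement'_map {Q : Type*} [Group Q] {N H : Subgroup G} (π : G →* Q)
    (hsurj : Function.Surjective π) (hker : π.ker ≤ H) (hc : IsComplement' N H) :
    IsComplement' (N.map π) (H.map π) := by
  apply isComplement'_of_disjoint_and_mul_eq_univ
  · rw [disjoint_iff, eq_bot_iff]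
    rintro x ⟨hxN, hxH⟩
    obtain ⟨n, hn, rfl⟩ := hxN
    obtain ⟨h, hh, hhx⟩ := hxH
    have hker' : h⁻¹ * n ∈ π.ker := by
      rw [MonoidHom.mem_ker, map_mul, map_inv, hhx, inv_mul_cancel]
    have hnH : n ∈ H := by
      have := H.mul_mem hh (hker hker')
      rwa [mul_inv_cancel_left] at this
    have : n ∈ N ⊓ H := ⟨hn, hnH⟩
    rw [disjoint_iff.mp hc.disjoint, Subgroup.mem_bot] at this
    simp [this]
  · rw [Set.eq_univ_iff_forall]
    intro x
    obtain ⟨g, rfl⟩ := hsurj x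
    obtain ⟨⟨n, h⟩, hnh⟩ := hc.2 g
    refine ⟨π n, ⟨n, n.2, rfl⟩, π h, ⟨h, h.2, rfl⟩, ?_⟩
    show π ↑n * π ↑h = π g
    rw [← map_mul]
    exact congrArg π hnh

theorem card_subgroupOf' (H T : Subgroup G) :
    Nat.card (H.subgroupOf T) = Nat.card (H ⊓ T : Subgroup G) := by
  rw [← Subgroup.subgroupOf_map_subtype]
  exact Nat.card_congr (Subgroup.equivMapOfInjective _ _ T.subtype_injective).toEquiv

theorem card_map_dvd {Q : Type*} [Group Q] (f : G →* Q) (H : Subgroup G) :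
    Nat.card (H.map f) ∣ Nat.card H := by
  have h1 : H.map f = (f.comp H.subtype).range := by
    rw [MonoidHom.range_comp, Subgroup.range_subtype]
  rw [h1]
  calc Nat.card (f.comp H.subtype).range
      = Nat.card (↥H ⧸ (f.comp H.subtype).ker) :=
        (Nat.card_congr (QuotientGroup.quotientKerEquivRange _).toEquiv).symm
    _ ∣ Nat.card H := Subgroup.card_quotient_dvd_card _

theorem card_inf_helper {N W L : Subgroup G} (hc : IsComplement' N W) (hNL : N ≤ L) :
    Nat.card L = Nat.card N * Nat.card (W ⊓ L : Subgroup G) := by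
  rw [← Nat.card_prod]
  refine (Nat.card_eq_of_bijective (fun x : N × (W ⊓ L : Subgroup G) =>
    (⟨(x.1 : G) * (x.2 : G), L.mul_mem (hNL x.1.2) x.2.2.2⟩ : L)) ⟨?_, ?_⟩).symm
  · rintro ⟨a, b⟩ ⟨a', b'⟩ hab
    have h : (a : G) * b = (a' : G) * b' := Subtype.ext_iff.mp hab
    have h2 : ((a, ⟨(b : G), b.2.1⟩) : N × W) = (a', ⟨(b' : G), b'.2.1⟩) := hc.1 h
    obtain ⟨h31, h32⟩ := Prod.ext_iff.mp h2
    have h32' : (⟨(b : G), b.2.1⟩ : W) = ⟨(b' : G), b'.2.1⟩ := h32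
    have hb : (b : G) = (b' : G) := by
      have := congrArg Subtype.val h32'
      simpa using this
    exact Prod.ext h31 (Subtype.ext hb)
  · rintro ⟨l, hl⟩
    obtain ⟨⟨nn, w⟩, hnw⟩ := hc.2 l
    have hnwG : (nn : G) * w = l := hnw
    have hwL : (w : G) ∈ L := by
      have : (w : G) = (nn : G)⁻¹ * l := by rw [← hnwG]; group
      rw [this]; exact L.mul_mem (L.inv_mem (hNL nn.2)) hl
    exact ⟨(nn, ⟨(w : G), w.2, hwL⟩), Subtype.ext hnwG⟩

end Helpers

open scoped commutatorElement in
theorem exists_normal_pgroup (Gb : Type*) [Group Gb] [Finite Gb] [Nontrivial Gb]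
    [hs : Group.IsSolvable Gb] :
    ∃ p : ℕ, p.Prime ∧ ∃ A : Subgroup Gb, A.Normal ∧ A ≠ ⊥ ∧ IsPGroup p A := by
  have hex : ∃ n, derivedSeries Gb n = ⊥ := hs.solvable
  classical
  set n₀ := Nat.find hex with hn₀
  have hfind : derivedSeries Gb n₀ = ⊥ := Nat.find_spec hex
  have hn0 : n₀ ≠ 0 := by
    intro h
    rw [h] at hfind
    exact top_ne_bot hfind
  set B := derivedSeries Gb (n₀ - 1) with hB
  have hBne : B ≠ ⊥ := Nat.find_min hex (Nat.sub_lt (Nat.pos_of_ne_zero hn0) one_pos)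
  have hBB : ⁅B, B⁆ = ⊥ := by
    have : derivedSeries Gb (n₀ - 1 + 1) = ⊥ := by
      rwa [Nat.sub_add_cancel (Nat.one_le_iff_ne_zero.mpr hn0)]
    exact this
  have hcomm : ∀ a ∈ B, ∀ b ∈ B, Commute a b := by
    intro a ha b hb
    have : ⁅a, b⁆ ∈ (⊥ : Subgroup Gb) := hBB ▸ commutator_mem_commutator ha hb
    rw [Subgroup.mem_bot, commutatorElement_def] at this
    have := mul_eq_one_iff_eq_inv.mp this
    rw [Commute, SemiconjBy]
    calc a * b = (a * b * a⁻¹ * b⁻¹) * (b * a) := by group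
    _ = b * a := by rw [this]; group
  have hcard : 1 < Nat.card B := (Subgroup.one_lt_card_iff_ne_bot B).mpr hBne
  set p := (Nat.card B).minFac with hp
  have hpp : p.Prime := Nat.minFac_prime (by omega)
  haveI : Fact p.Prime := ⟨hpp⟩
  haveI : Fintype B := Fintype.ofFinite _
  obtain ⟨b, hb⟩ := exists_prime_orderOf_dvd_card (G := B) p
    (by rw [← Nat.card_eq_fintype_card]; exact Nat.minFac_dvd _)
  set k := Nat.card B with hk
  refine ⟨p, hpp, ⟨{ carrier := {x | x ∈ B ∧ x ^ p ^ k = 1}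
                     one_mem' := ⟨B.one_mem, one_pow _⟩
                     mul_mem' := ?_
                     inv_mem' := ?_ }, ?_, ?_, ?_⟩⟩
  · rintro a c ⟨ha, ha2⟩ ⟨hc, hc2⟩
    exact ⟨B.mul_mem ha hc, by rw [(hcomm a ha c hc).mul_pow, ha2, hc2, one_mul]⟩
  · rintro a ⟨ha, ha2⟩
    exact ⟨B.inv_mem ha, by rw [inv_pow, ha2, inv_one]⟩
  · constructor
    rintro x ⟨hx, hx2⟩ g
    refine ⟨(derivedSeries_normal _ _).conj_mem x hx g, ?_⟩
    show (g * x * g⁻¹) ^ p ^ k = 1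
    rw [conj_pow, hx2, mul_one, mul_inv_cancel]
  · intro h
    have hbmem : (b : Gb) ∈ ({x | x ∈ B ∧ x ^ p ^ k = 1} : Set Gb) := by
      refine ⟨b.2, ?_⟩
      have : orderOf (b : Gb) = p := by
        rw [← hb]; exact (Subgroup.orderOf_coe b)
      rw [← this]
      exact orderOf_dvd_iff_pow_eq_one.mp (dvd_pow_self _ (by omega))
    have : (b : Gb) ∈ (⊥ : Subgroup Gb) := h ▸ hbmem
    rw [Subgroup.mem_bot] at this
    have : b = 1 := Subtype.ext this
    rw [this, orderOf_one] at hb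
    exact hpp.one_lt.ne hb
  · intro g
    exact ⟨k, Subtype.ext (by simpa using g.2.2)⟩

set_option maxHeartbeats 1000000 in
theorem conj_of_complements :
    ∀ (n : ℕ) (G : Type) [Group G] [Finite G], Nat.card G < n →
    ∀ (N H K : Subgroup G) [N.Normal],
    (Nat.card N).Coprime N.index → IsSolvable (G ⧸ N) →
    IsComplement' N H → IsComplement' N K →
    ∃ g : G, conjS g H = K := by
  intro n
  induction n using Nat.strong_induction_on with
  | _ n ih =>
    intro G _ _ hlt N H K hNnorm hcop hsol hH hK
    haveI : Group.IsSolvable (G ⧸ N) := hsol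
    haveI := hNnorm
    by_cases hNtop : N = ⊤
    · subst hNtop
      rw [isComplement'_top_left] at hH hK
      exact ⟨1, by rw [conjS_one, hH, hK]⟩
    haveI : Nontrivial (G ⧸ N) := by
      have h1 : Nat.card (G ⧸ N) ≠ 1 := fun h => hNtop (Subgroup.index_eq_one.mp h)
      have h0 : Nat.card (G ⧸ N) ≠ 0 := Nat.card_ne_zero.mpr ⟨inferInstance, inferInstance⟩
      exact Finite.one_lt_card_iff_nontrivial.mp (by omega)
    obtain ⟨p, hpp, A, hAnorm, hAne, hApg⟩ := exists_normal_pgroup (G ⧸ N) (hs := hsol)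
    haveI : Fact p.Prime := ⟨hpp⟩
    have hπs : Function.Surjective (QuotientGroup.mk' N) := QuotientGroup.mk'_surjective N
    set π := QuotientGroup.mk' N with hπdef
    set L := A.comap π with hLdef
    haveI hLnorm : L.Normal := hAnorm.comap π
    have hNL : N ≤ L := by
      intro x hx
      have : π x = 1 := (QuotientGroup.eq_one_iff x).mpr hx
      exact Subgroup.mem_comap.mpr (by rw [this]; exact A.one_mem)
    -- p-group property of W ⊓ L for complements W of N
    have pg : ∀ W : Subgroup G, N ⊓ W = ⊥ → IsPGroup p (W ⊓ L : Subgroup G) := by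
      intro W hW
      rintro ⟨x, hxW, hxL⟩
      obtain ⟨k, hk⟩ := hApg ⟨π x, Subgroup.mem_comap.mp hxL⟩
      refine ⟨k, ?_⟩
      have hk' : (π x) ^ p ^ k = 1 := Subtype.ext_iff.mp hk
      have hxN : x ^ p ^ k ∈ N := by
        rw [← QuotientGroup.eq_one_iff (x ^ p ^ k)]
        show π (x ^ p ^ k) = 1
        rw [map_pow]; exact hk'
      have hmem : x ^ p ^ k ∈ N ⊓ W := ⟨hxN, W.pow_mem hxW _⟩
      rw [hW, Subgroup.mem_bot] at hmem
      exact Subtype.ext (by simpa using hmem)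
    -- card of W ⊓ L for complements W of N
    have cardWA : ∀ W : Subgroup G, IsComplement' N W →
        Nat.card (W ⊓ L : Subgroup G) = Nat.card A := by
      intro W hW
      refine Nat.card_eq_of_bijective
        (fun x : (W ⊓ L : Subgroup G) => (⟨π x, Subgroup.mem_comap.mp x.2.2⟩ : A)) ⟨?_, ?_⟩
      · rintro ⟨x, hx⟩ ⟨y, hy⟩ hxy
        have hπxy : π x = π y := congrArg Subtype.val hxy
        have h1 : x⁻¹ * y ∈ N := by
          rw [← QuotientGroup.eq_one_iff (x⁻¹ * y)]
          show π (x⁻¹ * y) = 1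
          rw [map_mul, map_inv, hπxy, inv_mul_cancel]
        have h2 : x⁻¹ * y ∈ N ⊓ W := ⟨h1, W.mul_mem (W.inv_mem hx.1) hy.1⟩
        rw [disjoint_iff.mp hW.disjoint, Subgroup.mem_bot] at h2
        have : x = y := by
          have := congrArg (x * ·) h2
          simpa [mul_assoc] using this.symm
        exact Subtype.ext this
      · rintro ⟨a, ha⟩
        obtain ⟨g, hg⟩ := hπs a
        have hgL : g ∈ L := Subgroup.mem_comap.mpr (hg ▸ ha)
        obtain ⟨⟨nn, w⟩, hnw⟩ := hW.2 g
        have hnwG : (nn : G) * w = g := hnw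
        have hwL : (w : G) ∈ L := by
          have : (w : G) = (nn : G)⁻¹ * g := by rw [← hnwG]; group
          rw [this]; exact L.mul_mem (L.inv_mem (hNL nn.2)) hgL
        refine ⟨⟨w, w.2, hwL⟩, Subtype.ext ?_⟩
        show π w = a
        have hπn : π nn = 1 := (QuotientGroup.eq_one_iff _).mpr nn.2
        calc π w = π nn * π w := by rw [hπn, one_mul]
        _ = π g := by rw [← map_mul]; exact congrArg π hnwG
        _ = a := hg
    -- p ∤ card N
    have hcardA : 1 < Nat.card A := (Subgroup.one_lt_card_iff_ne_bot A).mpr hAne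
    obtain ⟨m, hm⟩ := IsPGroup.iff_card.mp hApg
    have hpA : p ∣ Nat.card A := by
      rw [hm]
      refine dvd_pow_self p ?_
      rintro rfl
      rw [pow_zero] at hm; omega
    have hpN : ¬ p ∣ Nat.card N := by
      intro hdvd
      have h2 : p ∣ N.index := hpA.trans (Subgroup.card_subgroup_dvd_card A)
      have : p ∣ 1 := hcop ▸ Nat.dvd_gcd hdvd h2
      exact hpp.one_lt.ne' (Nat.dvd_one.mp this)
    have hcardL : Nat.card L = Nat.card N * Nat.card A := by
      rw [card_inf_helper hH hNL, cardWA H hH]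
    have hNpos : 0 < Nat.card N := Nat.card_pos
    have hApos : 0 < Nat.card A := by omega
    -- Sylow subgroups of L
    have hidx : ∀ W : Subgroup G, IsComplement' N W →
        ((W ⊓ L).subgroupOf L).index = Nat.card N := by
      intro W hW
      have h1 := Subgroup.index_mul_card ((W ⊓ L).subgroupOf L)
      rw [card_subgroupOf_of_le inf_le_right, cardWA W hW, hcardL] at h1
      exact Nat.eq_of_mul_eq_mul_right hApos h1
    have hdisjH := disjoint_iff.mp hH.disjoint
    have hdisjK := disjoint_iff.mp hK.disjoint
    let PH : Sylow p L := ((pg H hdisjH).comap_subtype).toSylow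
      (by show ¬ p ∣ ((H ⊓ L).subgroupOf L).index; rw [hidx H hH]; exact hpN)
    let PK : Sylow p L := ((pg K hdisjK).comap_subtype).toSylow
      (by show ¬ p ∣ ((K ⊓ L).subgroupOf L).index; rw [hidx K hK]; exact hpN)
    obtain ⟨y, hy⟩ := MulAction.exists_smul_eq L PK PH
    have hyconj : conjS ((y : G)) (K ⊓ L) = H ⊓ L := by
      have h1 : (↑(y • PK) : Subgroup L) = ↑PH := congrArg _ hy
      rw [Sylow.coe_subgroup_smul, mulAut_conj_smul_eq_conjS] at h1
      have h2 := congrArg (Subgroup.map L.subtype) h1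
      rw [map_conjS] at h2
      have e1 : ((PK : Subgroup L)).map L.subtype = K ⊓ L := by
        rw [IsPGroup.toSylow_coe, Subgroup.map_comap_eq, Subgroup.range_subtype,
          inf_of_le_right inf_le_right]
      have e2 : ((PH : Subgroup L)).map L.subtype = H ⊓ L := by
        rw [IsPGroup.toSylow_coe, Subgroup.map_comap_eq, Subgroup.range_subtype,
          inf_of_le_right inf_le_right]
      rwa [e1, e2] at h2
    set cy : G := (y : G) with hcydef
    set K' := conjS cy K with hK'def
    have hK'c : IsComplement' N K' := by
      have := isComplement'_conjS hK cy
      rwa [conjS_eq_self_of_normal cy N] at this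
    have hK'L : K' ⊓ L = H ⊓ L := by
      rw [hK'def, ← conjS_eq_self_of_normal cy L, ← conjS_inf, hyconj,
        conjS_eq_self_of_normal cy L]
    -- the normalizer of the common Sylow
    have hWle : ∀ W : Subgroup G, W ⊓ L = H ⊓ L → W ≤ (Subgroup.normalizer ((H ⊓ L : Subgroup G) : Set G)) := by
      intro W hWL w hw
      rw [← conjS_eq_self_iff_mem_normalizer, ← hWL, conjS_inf,
        conjS_eq_self_of_normal w L, conjS_eq_self_iff_mem_normalizer.mpr (le_normalizer hw)]
    have hHG₀ : H ≤ (Subgroup.normalizer ((H ⊓ L : Subgroup G) : Set G)) := hWle H rfl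
    have hK'G₀ : K' ≤ (Subgroup.normalizer ((H ⊓ L : Subgroup G) : Set G)) := hWle K' hK'L
    have hFr : (Subgroup.normalizer ((H ⊓ L : Subgroup G) : Set G)) ⊔ L = ⊤ := by
      have h := Sylow.normalizer_sup_eq_top (N := L) PH
      have e2 : ((PH : Subgroup L)).map L.subtype = H ⊓ L := by
        rw [IsPGroup.toSylow_coe, Subgroup.map_comap_eq, Subgroup.range_subtype,
          inf_of_le_right inf_le_right]
      rwa [e2] at h
    by_cases hG₀top : (Subgroup.normalizer ((H ⊓ L : Subgroup G) : Set G)) = ⊤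
    · -- S := H ⊓ L is normal in G; pass to quotient
      haveI hSnorm : (H ⊓ L).Normal := Subgroup.normalizer_eq_top_iff.mp hG₀top
      have hρs : Function.Surjective (QuotientGroup.mk' (H ⊓ L)) :=
        QuotientGroup.mk'_surjective _
      set ρ := QuotientGroup.mk' (H ⊓ L) with hρdef
      have hkerρ : ρ.ker = H ⊓ L := QuotientGroup.ker_mk' _
      have hSH : H ⊓ L ≤ H := inf_le_left
      have hSK' : H ⊓ L ≤ K' := by rw [← hK'L]; exact inf_le_left
      haveI : (N.map ρ).Normal := hNnorm.map ρ hρs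
      have hcq : IsComplement' (N.map ρ) (H.map ρ) :=
        isComplement'_map ρ hρs (by rw [hkerρ]; exact hSH) hH
      have hcq' : IsComplement' (N.map ρ) (K'.map ρ) :=
        isComplement'_map ρ hρs (by rw [hkerρ]; exact hSK') hK'c
      have hcopq : (Nat.card (N.map ρ)).Coprime (N.map ρ).index := by
        have h1 : Nat.card (N.map ρ) ∣ Nat.card N := card_map_dvd (Q := G ⧸ (H ⊓ L)) ρ N
        have h2 : (N.map ρ).index ∣ N.index := by
          rw [hcq.symm.index_eq_card, hH.symm.index_eq_card]
          exact card_map_dvd (Q := G ⧸ (H ⊓ L)) ρ H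
        exact Nat.Coprime.coprime_dvd_left h1 (Nat.Coprime.coprime_dvd_right h2 hcop)
      have hsolq : IsSolvable ((G ⧸ (H ⊓ L)) ⧸ N.map ρ) := by
        have hNker : N ≤ ((QuotientGroup.mk' (N.map ρ)).comp ρ).ker := by
          intro x hx
          rw [MonoidHom.mem_ker, MonoidHom.comp_apply]
          exact (QuotientGroup.eq_one_iff _).mpr ⟨x, hx, rfl⟩
        refine solvable_of_surjective (f := QuotientGroup.lift N
          ((QuotientGroup.mk' (N.map ρ)).comp ρ) hNker) ?_
        intro z
        obtain ⟨g, hg⟩ := ((QuotientGroup.mk'_surjective (N.map ρ)).comp hρs) z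
        exact ⟨QuotientGroup.mk g, by rw [QuotientGroup.lift_mk']; exact hg⟩
      have hSgt1 : 1 < Nat.card (H ⊓ L : Subgroup G) := by rw [cardWA H hH]; exact hcardA
      have hltq : Nat.card (G ⧸ (H ⊓ L)) < Nat.card G := by
        have h := Subgroup.card_eq_card_quotient_mul_card_subgroup (H ⊓ L)
        have h3 : 0 < Nat.card (G ⧸ (H ⊓ L)) := Nat.card_pos
        rw [h]
        exact (Nat.lt_mul_iff_one_lt_right h3).mpr hSgt1
      obtain ⟨z, hz⟩ := ih (Nat.card G) hlt (G ⧸ (H ⊓ L)) hltq (N.map ρ) (H.map ρ)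
        (K'.map ρ) hcopq hsolq hcq hcq'
      obtain ⟨g, rfl⟩ := hρs z
      have hmapeq : (conjS g H).map ρ = K'.map ρ := by rw [map_conjS]; exact hz
      have hPle : H ⊓ L ≤ conjS g H := by
        rw [← conjS_eq_self_of_normal g (H ⊓ L)]
        exact conjS_mono g hSH
      have h1 : conjS g H = K' := by
        have e1 := Subgroup.comap_map_eq_self (f := ρ) (H := conjS g H)
          (by rw [hkerρ]; exact hPle)
        have e2 := Subgroup.comap_map_eq_self (f := ρ) (H := K') (by rw [hkerρ]; exact hSK')
        rw [← e1, hmapeq, e2]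
      exact ⟨cy⁻¹ * g, by
        rw [← conjS_conjS, h1, hK'def, conjS_conjS, inv_mul_cancel, conjS_one]⟩
    · -- recurse in the proper subgroup G₀ = normalizer
      haveI : (N.subgroupOf (Subgroup.normalizer ((H ⊓ L : Subgroup G) : Set G))).Normal := Subgroup.normal_subgroupOf
      have hcG₀ : IsComplement' (N.subgroupOf (Subgroup.normalizer ((H ⊓ L : Subgroup G) : Set G)))
          (H.subgroupOf (Subgroup.normalizer ((H ⊓ L : Subgroup G) : Set G))) := isComplement'_subgroupOf _ hH hHG₀
      have hcG₀' : IsComplement' (N.subgroupOf (Subgroup.normalizer ((H ⊓ L : Subgroup G) : Set G)))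
          (K'.subgroupOf (Subgroup.normalizer ((H ⊓ L : Subgroup G) : Set G))) := isComplement'_subgroupOf _ hK'c hK'G₀
      have hcop₀ : (Nat.card (N.subgroupOf (Subgroup.normalizer ((H ⊓ L : Subgroup G) : Set G)))).Coprime
          (N.subgroupOf (Subgroup.normalizer ((H ⊓ L : Subgroup G) : Set G))).index := by
        have h1 : Nat.card (N.subgroupOf (Subgroup.normalizer ((H ⊓ L : Subgroup G) : Set G))) ∣ Nat.card N := by
          rw [card_subgroupOf']
          exact Subgroup.card_dvd_of_le inf_le_left
        have h2 : (N.subgroupOf (Subgroup.normalizer ((H ⊓ L : Subgroup G) : Set G))).index = N.index := by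
          rw [hcG₀.symm.index_eq_card, card_subgroupOf_of_le hHG₀, ← hH.symm.index_eq_card]
        rw [h2]
        exact Nat.Coprime.coprime_dvd_left h1 hcop
      have hsol₀ : IsSolvable ((Subgroup.normalizer ((H ⊓ L : Subgroup G) : Set G)) ⧸ N.subgroupOf (Subgroup.normalizer ((H ⊓ L : Subgroup G) : Set G))) := by
        have hker : ((QuotientGroup.mk' N).comp (Subgroup.normalizer ((H ⊓ L : Subgroup G) : Set G)).subtype).ker
            = N.subgroupOf (Subgroup.normalizer ((H ⊓ L : Subgroup G) : Set G)) := by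
          ext x
          rw [MonoidHom.mem_ker, MonoidHom.comp_apply]
          exact QuotientGroup.eq_one_iff _
        have e := QuotientGroup.quotientKerEquivRange
          ((QuotientGroup.mk' N).comp (Subgroup.normalizer ((H ⊓ L : Subgroup G) : Set G)).subtype)
        haveI hsolker : Group.IsSolvable ((Subgroup.normalizer ((H ⊓ L : Subgroup G) : Set G)) ⧸
            ((QuotientGroup.mk' N).comp (Subgroup.normalizer ((H ⊓ L : Subgroup G) : Set G)).subtype).ker) :=
          solvable_of_solvable_injective (f := e.toMonoidHom) e.injective
        exact solvable_of_solvable_injective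
          (f := (QuotientGroup.quotientMulEquivOfEq hker).symm.toMonoidHom)
          (QuotientGroup.quotientMulEquivOfEq hker).symm.injective
      have hlt₀ : Nat.card (Subgroup.normalizer ((H ⊓ L : Subgroup G) : Set G)) < Nat.card G := by
        refine lt_of_le_of_ne (Nat.le_of_dvd Nat.card_pos
          (Subgroup.card_subgroup_dvd_card _)) ?_
        intro heq
        exact hG₀top (Subgroup.eq_top_of_card_eq _ heq)
      obtain ⟨x, hx⟩ := ih (Nat.card G) hlt (Subgroup.normalizer ((H ⊓ L : Subgroup G) : Set G)) hlt₀
        (N.subgroupOf (Subgroup.normalizer ((H ⊓ L : Subgroup G) : Set G))) (H.subgroupOf (Subgroup.normalizer ((H ⊓ L : Subgroup G) : Set G)))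
        (K'.subgroupOf (Subgroup.normalizer ((H ⊓ L : Subgroup G) : Set G))) hcop₀ hsol₀ hcG₀ hcG₀'
      have hx' : conjS (x : G) H = K' := by
        have h2 := congrArg (Subgroup.map (Subgroup.normalizer ((H ⊓ L : Subgroup G) : Set G)).subtype) hx
        rwa [map_conjS, Subgroup.subgroupOf_map_subtype, Subgroup.subgroupOf_map_subtype,
          inf_of_le_left hHG₀, inf_of_le_left hK'G₀] at h2
      exact ⟨cy⁻¹ * (x : G), by
        rw [← conjS_conjS, hx', hK'def, conjS_conjS, inv_mul_cancel, conjS_one]⟩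

/-- Frattini-type argument: if `N ≤ M` are normal subgroups of the finite group `G`,
`N` is a Hall subgroup of `M`, `M/N` is solvable, and `Q` is a complement of `N` in `M`,
then `G = N·N_G(Q)` and `N ∩ N_G(Q) = C_N(Q)`. -/
theorem stmt5 (G : Type) [Group G] [Fintype G] (N M : Subgroup G)
    [hN : N.Normal] [hM : M.Normal] (hNM : N ≤ M)
    (hcop : (Nat.card N).Coprime (N.relIndex M))
    [hNsub : (N.subgroupOf M).Normal]
    (hsol : IsSolvable (M ⧸ N.subgroupOf M))
    (Q : Subgroup G) (hQM : Q ≤ M) (hNQ : N ⊓ Q = ⊥)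
    (hNQM : ∀ m ∈ M, ∃ n ∈ N, ∃ q ∈ Q, m = n * q) :
    (∀ g : G, ∃ n ∈ N, ∃ t ∈ Subgroup.normalizer (Q : Set G), g = n * t) ∧
      N ⊓ Subgroup.normalizer (Q : Set G) = N ⊓ Subgroup.centralizer (Q : Set G) := by
  constructor
  · -- Frattini argument via conjugacy of complements
    intro g
    -- complements inside M
    have mk : ∀ Q' : Subgroup G, Q' ≤ M → N ⊓ Q' = ⊥ →
        (∀ m ∈ M, ∃ n ∈ N, ∃ q ∈ Q', m = n * q) →
        IsComplement' (N.subgroupOf M) (Q'.subgroupOf M) := by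
      intro Q' hQ'M hNQ' hdec
      apply isComplement'_of_disjoint_and_mul_eq_univ
      · rw [disjoint_iff, eq_bot_iff]
        rintro x ⟨h1, h2⟩
        have hx : (x : G) ∈ N ⊓ Q' := ⟨h1, h2⟩
        rw [hNQ', Subgroup.mem_bot] at hx
        simpa [Subgroup.mem_bot] using Subtype.ext hx
      · rw [Set.eq_univ_iff_forall]
        intro t
        obtain ⟨nn, hnn, q, hq, hdq⟩ := hdec (t : G) t.2
        refine ⟨⟨nn, hNM hnn⟩, hnn, ⟨q, hQ'M hq⟩, hq, ?_⟩
        exact Subtype.ext hdq.symm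
    have hc1 : IsComplement' (N.subgroupOf M) (Q.subgroupOf M) := mk Q hQM hNQ hNQM
    -- the conjugate subgroup
    have hgQM : conjS g Q ≤ M := by
      intro x hx
      rw [mem_conjS] at hx
      have := hM.conj_mem _ (hQM hx) g
      simpa [mul_assoc] using this
    have hgNQ : N ⊓ conjS g Q = ⊥ := by
      rw [← conjS_eq_self_of_normal g N, ← conjS_inf, hNQ, conjS_bot]
    have hgdec : ∀ m ∈ M, ∃ n ∈ N, ∃ q ∈ conjS g Q, m = n * q := by
      intro m hm
      have hm' : g⁻¹ * m * g ∈ M := by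
        have := hM.conj_mem _ hm g⁻¹
        simpa [mul_assoc] using this
      obtain ⟨nn, hnn, q, hq, hdq⟩ := hNQM _ hm'
      refine ⟨g * nn * g⁻¹, hN.conj_mem _ hnn g, g * q * g⁻¹, ?_, ?_⟩
      · rw [mem_conjS]
        have : g⁻¹ * (g * q * g⁻¹) * g = q := by group
        rw [this]; exact hq
      · have : m = g * (g⁻¹ * m * g) * g⁻¹ := by group
        rw [this, hdq]; group
    have hc2 : IsComplement' (N.subgroupOf M) ((conjS g Q).subgroupOf M) :=
      mk (conjS g Q) hgQM hgNQ hgdec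
    have hcop' : (Nat.card (N.subgroupOf M)).Coprime (N.subgroupOf M).index := by
      rw [card_subgroupOf', inf_of_le_left hNM]
      exact hcop
    obtain ⟨m, hm⟩ := conj_of_complements (Nat.card M + 1) M (Nat.lt_succ_self _)
      (N.subgroupOf M) (Q.subgroupOf M) ((conjS g Q).subgroupOf M) hcop' hsol hc1 hc2
    -- push the conjugation down to G
    have hmG : conjS (m : G) Q = conjS g Q := by
      have h2 := congrArg (Subgroup.map M.subtype) hm
      rwa [map_conjS, Subgroup.subgroupOf_map_subtype, Subgroup.subgroupOf_map_subtype,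
        inf_of_le_left hQM, inf_of_le_left hgQM] at h2
    have hnorm : g⁻¹ * (m : G) ∈ Subgroup.normalizer (Q : Set G) := by
      rw [← conjS_eq_self_iff_mem_normalizer, ← conjS_conjS, hmG, conjS_conjS,
        inv_mul_cancel, conjS_one]
    obtain ⟨nn, hnn, q, hq, hdq⟩ := hNQM (m : G) m.2
    refine ⟨nn, hnn, q * (g⁻¹ * (m : G))⁻¹, (Subgroup.normalizer (Q : Set G)).mul_mem
      (le_normalizer hq) ((Subgroup.normalizer (Q : Set G)).inv_mem hnorm), ?_⟩
    have : g = (m : G) * (g⁻¹ * (m : G))⁻¹ := by group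
    rw [this, hdq]; group
  · -- N ∩ N_G(Q) = N ∩ C_G(Q)
    apply le_antisymm
    · rintro x ⟨hxN, hxNorm⟩
      refine ⟨hxN, Subgroup.mem_centralizer_iff.mpr ?_⟩
      intro q hq
      have hq' : q ∈ Q := hq
      have hconj : x * q * x⁻¹ ∈ Q := (Subgroup.mem_normalizer_iff.mp hxNorm q).mp hq'
      have hcomm : x * q * x⁻¹ * q⁻¹ ∈ N ⊓ Q := by
        constructor
        · have h1 : q * x⁻¹ * q⁻¹ ∈ N := hN.conj_mem _ (N.inv_mem hxN) q
          have h2 := N.mul_mem hxN h1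
          simpa [mul_assoc] using h2
        · exact Q.mul_mem hconj (Q.inv_mem hq')
      rw [hNQ, Subgroup.mem_bot] at hcomm
      have h2 : x * q = (x * q * x⁻¹ * q⁻¹) * (q * x) := by group
      rw [hcomm, one_mul] at h2
      exact h2.symm
    · rintro x ⟨hxN, hxC⟩
      refine ⟨hxN, Subgroup.mem_normalizer_iff.mpr ?_⟩
      intro h
      constructor
      · intro hh
        have hc := Subgroup.mem_centralizer_iff.mp hxC h hh
        have : x * h * x⁻¹ = h := by rw [← hc]; group
        rw [this]; exact hh
      · intro hh
        have hc := Subgroup.mem_centralizer_iff.mp hxC _ hh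
        have h4 : x * h = x * (x * h * x⁻¹) := by
          calc x * h = (x * h * x⁻¹) * x := by group
          _ = x * (x * h * x⁻¹) := hc
        have h5 : h = x * h * x⁻¹ := mul_left_cancel h4
        rw [h5]; exact hh
end
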